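/- arXiv:1712.04864 — 13 statements merged into one kernel-verified Lean document; each statement's English description precedes it below -/
import Mathlib

section
/- Axiom (ax7) — cof φ → (φ → cof ψ) → cof (φ ∧ ψ) for all φ ψ : Prop — holds if and only if the class of cofibrations is closed under composition: for all types X, Y, Z and all cofibrations m : X → Y and n : Y → Z, the composite n ∘ m : X → Z is a cofibration. -/
/-- A function `m : X → Y` is a cofibration (relative to `cof`) if it is injective
and its image is classified by a cofibrant proposition at every point. -/
def IsCofibration (cof : Prop → Prop) {X Y : Type} (m : X → Y) : Prop :=
  Function.Injective m ∧ ∀ y : Y, cof (∃ x, m x = y)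

/-- Axiom (ax7) holds iff cofibrations are closed under composition. -/
theorem ax7_iff_cofibrations_closed_under_composition (cof : Prop → Prop) :
    (∀ φ ψ : Prop, cof φ → (φ → cof ψ) → cof (φ ∧ ψ)) ↔
      (∀ (X Y Z : Type) (m : X → Y) (n : Y → Z),
        IsCofibration cof m → IsCofibration cof n → IsCofibration cof (n ∘ m)) := by
  constructor
  · intro ax7 X Y Z m n hm hn
    refine ⟨hn.1.comp hm.1, fun z => ?_⟩
    have h := ax7 (∃ y, n y = z) (∃ x, n (m x) = z) (hn.2 z) ?_
    · have : (∃ x, (n ∘ m) x = z) = ((∃ y, n y = z) ∧ ∃ x, n (m x) = z) := by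
        apply propext
        constructor
        · rintro ⟨x, hx⟩; exact ⟨⟨m x, hx⟩, ⟨x, hx⟩⟩
        · rintro ⟨_, ⟨x, hx⟩⟩; exact ⟨x, hx⟩
      rw [this]; exact h
    · rintro ⟨y, hy⟩
      have : (∃ x, n (m x) = z) = (∃ x, m x = y) := by
        apply propext
        constructor
        · rintro ⟨x, hx⟩; exact ⟨x, hn.1 (hx.trans hy.symm)⟩
        · rintro ⟨x, hx⟩; exact ⟨x, by rw [hx, hy]⟩
      rw [this]; exact hm.2 y
  · intro hcomp φ ψ hφ hψ
    have hm : IsCofibration cof (fun x : PLift (φ ∧ ψ) => PLift.up x.down.1) := by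
      refine ⟨fun a b _ => Subsingleton.elim a b, fun y => ?_⟩
      have : (∃ x : PLift (φ ∧ ψ), PLift.up x.down.1 = y) = ψ := by
        apply propext
        constructor
        · rintro ⟨x, _⟩; exact x.down.2
        · intro hp; exact ⟨⟨y.down, hp⟩, rfl⟩
      rw [this]; exact hψ y.down
    have hn : IsCofibration cof (fun _ : PLift φ => PUnit.unit) := by
      refine ⟨fun a b _ => Subsingleton.elim a b, fun y => ?_⟩
      have : (∃ _ : PLift φ, PUnit.unit = y) = φ := by
        apply propext
        constructor
        · rintro ⟨x, _⟩; exact x.down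
        · intro hp; exact ⟨⟨hp⟩, rfl⟩
      rw [this]; exact hφ
    have h := (hcomp _ _ _ _ _ hm hn).2 PUnit.unit
    have : (∃ x : PLift (φ ∧ ψ),
        ((fun _ : PLift φ => PUnit.unit) ∘ fun x : PLift (φ ∧ ψ) => PLift.up x.down.1) x
          = PUnit.unit) = (φ ∧ ψ) := by
      apply propext
      constructor
      · rintro ⟨x, _⟩; exact x.down
      · intro hp; exact ⟨⟨hp⟩, rfl⟩
    rw [this] at h; exact h
end

section
/- Axiom (ax8) — for every φ : I → Prop, (∀ i, cof (φ i)) → cof (∀ i, φ i) — holds if and only if the class of cofibrations is closed under exponentiation by I: for every cofibration m : X → Y, the map (fun g => m ∘ g) : (I → X) → (I → Y) is a cofibration. -/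
/-- Axiom (ax8) holds iff cofibrations are closed under exponentiation by the interval `I`. -/
theorem ax8_iff_cofibrations_closed_under_exponentiation
    (I : Type) (i0 i1 : I) (cof : Prop → Prop) :
    (∀ φ : I → Prop, (∀ i, cof (φ i)) → cof (∀ i, φ i)) ↔
      (∀ (X Y : Type) (m : X → Y), IsCofibration cof m →
        IsCofibration cof (fun g : I → X => m ∘ g)) := by
  constructor
  · intro ax8 X Y m hm
    obtain ⟨hinj, hcof⟩ := hm
    constructor
    · intro g₁ g₂ h
      funext i
      exact hinj (congrFun h i)
    · intro h
      have key : (∃ g : I → X, (fun g : I → X => m ∘ g) g = h) =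
          ∀ i, ∃ x, m x = h i := by
        apply propext
        constructor
        · rintro ⟨g, rfl⟩ i
          exact ⟨g i, rfl⟩
        · intro hall
          choose g hg using hall
          exact ⟨g, funext hg⟩
      rw [key]
      exact ax8 _ (fun i => hcof (h i))
  · intro hclosed φ hφ
    have hm : IsCofibration cof (Subtype.val : {i : I // φ i} → I) := by
      constructor
      · exact Subtype.val_injective
      · intro y
        have : (∃ x : {i : I // φ i}, x.val = y) = φ y := by
          apply propext
          constructor
          · rintro ⟨⟨x, hx⟩, rfl⟩; exact hx
          · intro hy; exact ⟨⟨y, hy⟩, rfl⟩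
        rw [this]; exact hφ y
    have := (hclosed _ _ _ hm).2 id
    have key : (∃ g : I → {i : I // φ i},
        (fun g : I → {i : I // φ i} => Subtype.val ∘ g) g = id) = ∀ i, φ i := by
      apply propext
      constructor
      · rintro ⟨g, hg⟩ i
        have : (g i).val = i := congrFun hg i
        exact this ▸ (g i).property
      · intro hall
        exact ⟨fun i => ⟨i, hall i⟩, rfl⟩
    rwa [key] at this
end

section
/- There is a function fill assigning to every Γ : Type, family A : Γ → Type, endpoint e ∈ {i0, i1}, fibration structure α : isFib A and path p : I → Γ a filling structure fill e α p : Fill e (A ∘ p), such that: (i) for all φ with cof φ, f : [φ] → Π(A ∘ p) and a : A (p e) with (φ, f)@e ↗ a, one has (fill e α p φ f a) ē = α e p φ f a; and (ii) fill is stable under reindexing: for every γ : Δ → Γ and p : I → Δ, fill e α (γ ∘ p) = fill e (α[γ]) p. -/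
namespace CCHM

variable {I : Type}

/-- The two endpoints of the interval: `false ↦ i0`, `true ↦ i1`;
negation `!e` swaps the endpoints. -/
def pt (i0 i1 : I) : Bool → I := fun e => bif e then i1 else i0

/-- A composition structure for an `I`-indexed family of types:
any cofibrant partial path extended at endpoint `e` is extended at the other
endpoint `!e`. -/
def Comp (i0 i1 : I) (cof : Prop → Prop) (e : Bool) (A : I → Type) : Type :=
  (φ : Prop) → cof φ → (f : φ → (i : I) → A i) →
    (a0 : A (pt i0 i1 e)) → (∀ u : φ, f u (pt i0 i1 e) = a0) →
    { a1 : A (pt i0 i1 (!e)) // ∀ u : φ, f u (pt i0 i1 (!e)) = a1 }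

/-- A (CCHM) fibration structure on a family `A : Γ → Type`. -/
def isFib (i0 i1 : I) (cof : Prop → Prop) {Γ : Type} (A : Γ → Type) : Type :=
  (e : Bool) → (p : I → Γ) → Comp i0 i1 cof e (fun i => A (p i))

/-- Reindexing of fibration structures: `α[γ] e p := α e (γ ∘ p)`. -/
def reind (i0 i1 : I) (cof : Prop → Prop) {Δ Γ : Type} {A : Γ → Type}
    (γ : Δ → Γ) (α : isFib i0 i1 cof A) : isFib i0 i1 cof (fun x => A (γ x)) :=
  fun e p => α e (fun i => γ (p i))

/-- A filling structure for an `I`-indexed family of types at endpoint `e`. -/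
def Fill (i0 i1 : I) (cof : Prop → Prop) (e : Bool) (A : I → Type) : Type :=
  (φ : Prop) → cof φ → (f : φ → (i : I) → A i) →
    (a : A (pt i0 i1 e)) → (∀ u : φ, f u (pt i0 i1 e) = a) →
    { g : (i : I) → A i // (∀ u : φ, f u = g) ∧ g (pt i0 i1 e) = a }

/-! ### Auxiliary material for the construction of filling from composition -/

/-- Bundle of all the interval axioms. -/
structure Hyp (I : Type) where
  i0 : I
  i1 : I
  cof : Prop → Prop
  ax2 : i0 ≠ i1
  cnx : I → I → I
  dsj : I → I → I
  ax3 : ∀ x, cnx i0 x = i0 ∧ cnx x i0 = i0 ∧ cnx i1 x = x ∧ cnx x i1 = x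
  ax4 : ∀ x, dsj i0 x = x ∧ dsj x i0 = x ∧ dsj i1 x = i1 ∧ dsj x i1 = i1
  ax5 : ∀ i : I, cof (i = i0) ∧ cof (i = i1)
  ax6 : ∀ φ ψ : Prop, cof φ → cof ψ → cof (φ ∨ ψ)

theorem comp_heq {i0 i1 : I} {cof : Prop → Prop} {Γ : Type} {A : Γ → Type}
    (α : isFib i0 i1 cof A) (e : Bool) {q p : I → Γ} (hq : q = p)
    {ψ φ : Prop} (hpr : ψ = φ) (hψ : cof ψ) (hφ : cof φ)
    {f' : ψ → (j : I) → A (q j)} {f : φ → (j : I) → A (p j)} (hf : HEq f' f)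
    {a' : A (q (pt i0 i1 e))} {a : A (p (pt i0 i1 e))} (ha' : HEq a' a)
    (h' : ∀ u, f' u (pt i0 i1 e) = a') (h : ∀ u, f u (pt i0 i1 e) = a) :
    HEq (α e q ψ hψ f' a' h').1 (α e p φ hφ f a h).1 := by
  subst hq
  subst hpr
  have hf' : f' = f := eq_of_heq hf
  subst hf'
  have ha'' : a' = a := eq_of_heq ha'
  subst ha''
  rfl

theorem fun_heq {ψ φ : Prop} (hpr : ψ = φ) {T' T : Type} (hT : T' = T)
    (f' : ψ → T') (f : φ → T) (hf : ∀ (u : ψ) (v : φ), HEq (f' u) (f v)) :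
    HEq f' f := by
  subst hpr
  subst hT
  exact heq_of_eq (funext fun u => eq_of_heq (hf u u))

theorem comp_id_heq {B : I → Type} (g : ∀ i, B i) (d : I → I)
    (hd : d = fun j => j) : HEq (fun j => g (d j)) g := by
  subst hd
  rfl

namespace Hyp

variable {I : Type} (H : Hyp I)

/-- The connection used to fill from endpoint `e`. -/
def conn (e : Bool) : I → I → I := bif e then H.dsj else H.cnx

theorem conn_src (e : Bool) (i : I) :
    H.conn e i (pt H.i0 H.i1 e) = pt H.i0 H.i1 e := by
  cases e
  · exact (H.ax3 i).2.1
  · exact (H.ax4 i).2.2.2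

theorem conn_tgt (e : Bool) (i : I) :
    H.conn e i (pt H.i0 H.i1 (!e)) = i := by
  cases e
  · exact (H.ax3 i).2.2.2
  · exact (H.ax4 i).2.1

theorem conn_const (e : Bool) (j : I) :
    H.conn e (pt H.i0 H.i1 e) j = pt H.i0 H.i1 e := by
  cases e
  · exact (H.ax3 j).1
  · exact (H.ax4 j).2.2.1

theorem conn_id (e : Bool) (j : I) :
    H.conn e (pt H.i0 H.i1 (!e)) j = j := by
  cases e
  · exact (H.ax3 j).2.2.1
  · exact (H.ax4 j).1

theorem pt_ne (e : Bool) : pt H.i0 H.i1 (!e) ≠ pt H.i0 H.i1 e := by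
  cases e
  · exact fun h => H.ax2 h.symm
  · exact H.ax2

theorem cof_pt (e : Bool) (i : I) : H.cof (i = pt H.i0 H.i1 e) := by
  cases e
  · exact (H.ax5 i).1
  · exact (H.ax5 i).2

open Classical in
/-- The extended partial element used to construct the filling at `i`. -/
noncomputable def fpart {Γ : Type} (A : Γ → Type) (e : Bool) (p : I → Γ) {φ : Prop}
    (f : φ → (j : I) → A (p j)) (a : A (p (pt H.i0 H.i1 e))) (i : I) :
    (φ ∨ i = pt H.i0 H.i1 e) → (j : I) → A (p (H.conn e i j)) :=
  fun u => if h : i = pt H.i0 H.i1 e then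
    fun j => cast (congrArg (fun k => A (p k))
      (show H.conn e i j = pt H.i0 H.i1 e by rw [h]; exact H.conn_const e j)).symm a
  else
    fun j => f (u.resolve_right h) (H.conn e i j)

/-- The composition producing the filling at `i`. -/
noncomputable def fcomp {Γ : Type} (A : Γ → Type) (e : Bool) (α : isFib H.i0 H.i1 H.cof A)
    (p : I → Γ) {φ : Prop} (hφ : H.cof φ) (f : φ → (j : I) → A (p j))
    (a : A (p (pt H.i0 H.i1 e))) (ha : ∀ u : φ, f u (pt H.i0 H.i1 e) = a) (i : I) :
    { a1 : A (p (H.conn e i (pt H.i0 H.i1 (!e)))) //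
      ∀ u : φ ∨ i = pt H.i0 H.i1 e,
        H.fpart A e p f a i u (pt H.i0 H.i1 (!e)) = a1 } :=
  α e (fun j => p (H.conn e i j)) (φ ∨ i = pt H.i0 H.i1 e)
    (H.ax6 _ _ hφ (H.cof_pt e i)) (H.fpart A e p f a i)
    (cast (congrArg (fun k => A (p k)) (H.conn_src e i)).symm a)
    (by
      intro u
      by_cases h : i = pt H.i0 H.i1 e
      · simp only [fpart, dif_pos h]
      · simp only [fpart, dif_neg h]
        exact eq_of_heq ((congr_arg_heq (f (u.resolve_right h)) (H.conn_src e i)).trans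
          ((heq_of_eq (ha _)).trans (cast_heq _ a).symm)))

/-- The filling structure constructed from a composition structure. -/
noncomputable def myFill {Γ : Type} (A : Γ → Type) (e : Bool) (α : isFib H.i0 H.i1 H.cof A)
    (p : I → Γ) : Fill H.i0 H.i1 H.cof e (fun i => A (p i)) :=
  fun φ hφ f a ha =>
    ⟨fun i => cast (congrArg (fun k => A (p k)) (H.conn_tgt e i))
        (H.fcomp A e α p hφ f a ha i).1,
     by
        constructor
        · intro u
          funext i
          have h2 := (H.fcomp A e α p hφ f a ha i).2 (Or.inl u)
          refine eq_of_heq (HEq.trans ?_ (cast_heq _ _).symm)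
          rw [← h2]
          by_cases h : i = pt H.i0 H.i1 e
          · simp only [fpart, dif_pos h]
            refine HEq.trans ?_ (cast_heq _ _).symm
            subst h
            exact heq_of_eq (ha u)
          · simp only [fpart, dif_neg h]
            exact (congr_arg_heq (f u) (H.conn_tgt e i)).symm
        · have h2 := (H.fcomp A e α p hφ f a ha (pt H.i0 H.i1 e)).2 (Or.inr rfl)
          refine eq_of_heq (HEq.trans (cast_heq _ _) ?_)
          rw [← h2]
          simp only [fpart, dif_pos]
          exact (cast_heq _ _)⟩

end Hyp

/-- Filling structures can be constructed from composition structures, agreeing with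
the composition at the far endpoint and stably under reindexing. -/
theorem fill_from_comp (i0 i1 : I) (cof : Prop → Prop)
    (ax2 : i0 ≠ i1)
    (cnx dsj : I → I → I)
    (ax3 : ∀ x, cnx i0 x = i0 ∧ cnx x i0 = i0 ∧ cnx i1 x = x ∧ cnx x i1 = x)
    (ax4 : ∀ x, dsj i0 x = x ∧ dsj x i0 = x ∧ dsj i1 x = i1 ∧ dsj x i1 = i1)
    (ax5 : ∀ i : I, cof (i = i0) ∧ cof (i = i1))
    (ax6 : ∀ φ ψ : Prop, cof φ → cof ψ → cof (φ ∨ ψ)) :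
    ∃ fill : (Γ : Type) → (A : Γ → Type) → (e : Bool) → isFib i0 i1 cof A →
        (p : I → Γ) → Fill i0 i1 cof e (fun i => A (p i)),
      (∀ (Γ : Type) (A : Γ → Type) (e : Bool) (α : isFib i0 i1 cof A) (p : I → Γ)
          (φ : Prop) (hφ : cof φ) (f : φ → (i : I) → A (p i)) (a : A (p (pt i0 i1 e)))
          (ha : ∀ u : φ, f u (pt i0 i1 e) = a),
        (fill Γ A e α p φ hφ f a ha).1 (pt i0 i1 (!e)) = (α e p φ hφ f a ha).1) ∧
      (∀ (Δ Γ : Type) (A : Γ → Type) (e : Bool) (α : isFib i0 i1 cof A)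
          (γ : Δ → Γ) (p : I → Δ),
        fill Γ A e α (fun i => γ (p i)) =
          fill Δ (fun x => A (γ x)) e (reind i0 i1 cof γ α) p) := by
  refine ⟨fun Γ A e α p =>
    (Hyp.mk i0 i1 cof ax2 cnx dsj ax3 ax4 ax5 ax6).myFill A e α p, ?_, ?_⟩
  · intro Γ A e α p φ hφ f a ha
    set H : Hyp I := Hyp.mk i0 i1 cof ax2 cnx dsj ax3 ax4 ax5 ax6 with hH
    show cast (congrArg (fun k => A (p k)) (H.conn_tgt e (pt i0 i1 (!e))))
        (H.fcomp A e α p hφ f a ha (pt i0 i1 (!e))).1 = (α e p φ hφ f a ha).1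
    have hne : pt i0 i1 (!e) ≠ pt i0 i1 e := H.pt_ne e
    have hq : (fun j => p (H.conn e (pt i0 i1 (!e)) j)) = p :=
      funext fun j => congrArg p (H.conn_id e j)
    have hpr : (φ ∨ pt i0 i1 (!e) = pt i0 i1 e) = φ :=
      propext ⟨fun u => u.resolve_right hne, Or.inl⟩
    refine eq_of_heq ((cast_heq _ _).trans ?_)
    refine comp_heq α e hq hpr _ hφ ?_ (cast_heq _ _) _ ha
    refine fun_heq hpr
      (congrArg (fun q : I → Γ => (j : I) → A (q j)) hq) _ f ?_
    intro u v
    simp only [Hyp.fpart, dif_neg (show ¬ (pt i0 i1 (!e) = pt H.i0 H.i1 e) from hne)]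
    exact comp_id_heq (B := fun j => A (p j)) (f v)
      (H.conn e (pt i0 i1 (!e))) (funext (H.conn_id e))
  · intro Δ Γ A e α γ p
    rfl

end CCHM
end

section
/- For every Γ : Type, A1 : Γ → Type and A2 : (Σ x : Γ, A1 x) → Type there is a function isFibΣ : isFib A1 → isFib A2 → isFib (fun x => Σ a1 : A1 x, A2 ⟨x, a1⟩), and it is stable under reindexing: for every γ : Δ → Γ, (isFibΣ α1 α2)[γ] = isFibΣ (α1[γ]) (α2[γ ×' id]), where γ ×' id : (Σ x : Δ, A1 (γ x)) → (Σ x : Γ, A1 x) sends ⟨x, a⟩ to ⟨γ x, a⟩. -/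
namespace CCHM

variable {I : Type}

theorem heq_app {A : I → Type} (g : (i : I) → A i) {x y : I} (h : x = y) :
    HEq (g x) (g y) := by subst h; rfl

theorem heq_snd {X : Type} {B : X → Type} {s t : Σ x, B x} (h : s = t) :
    HEq s.2 t.2 := by subst h; rfl

section Aux
variable (i0 i1 : I) (cof : Prop → Prop) (cnx dsj : I → I → I)

/-- Connection used for filling: from the path endpoint `e`. -/
def conn : Bool → I → I → I := fun e i j => bif e then dsj i j else cnx i j

variable
  (ax3 : ∀ x, cnx i0 x = i0 ∧ cnx x i0 = i0 ∧ cnx i1 x = x ∧ cnx x i1 = x)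
  (ax4 : ∀ x, dsj i0 x = x ∧ dsj x i0 = x ∧ dsj i1 x = i1 ∧ dsj x i1 = i1)

include ax3 ax4

theorem conn_e (e : Bool) (i : I) :
    conn cnx dsj e i (pt i0 i1 e) = pt i0 i1 e := by
  cases e
  · exact (ax3 i).2.1
  · exact (ax4 i).2.2.2

theorem conn_ne (e : Bool) (i : I) :
    conn cnx dsj e i (pt i0 i1 (!e)) = i := by
  cases e
  · exact (ax3 i).2.2.2
  · exact (ax4 i).2.1

theorem conn_pt (e : Bool) (j : I) :
    conn cnx dsj e (pt i0 i1 e) j = pt i0 i1 e := by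
  cases e
  · exact (ax3 j).1
  · exact (ax4 j).2.2.1

omit ax3 ax4 in
theorem cof_eq_pt (ax5 : ∀ i : I, cof (i = i0) ∧ cof (i = i1)) (e : Bool) (i : I) :
    cof (i = pt i0 i1 e) := by
  cases e
  · exact (ax5 i).1
  · exact (ax5 i).2


/-- Filling in the first component. -/
noncomputable def fillA1 {Γ : Type} {A1 : Γ → Type}
    (ax5 : ∀ i : I, cof (i = i0) ∧ cof (i = i1))
    (ax6 : ∀ φ ψ : Prop, cof φ → cof ψ → cof (φ ∨ ψ))
    (α1 : (e : Bool) → (p : I → Γ) → (φ : Prop) → cof φ →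
      (f : φ → (i : I) → A1 (p i)) → (a0 : A1 (p (pt i0 i1 e))) →
      (∀ u : φ, f u (pt i0 i1 e) = a0) →
      { a1 : A1 (p (pt i0 i1 (!e))) // ∀ u : φ, f u (pt i0 i1 (!e)) = a1 })
    (e : Bool) (p : I → Γ) (φ : Prop) (cφ : cof φ)
    (f1 : φ → (i : I) → A1 (p i)) (a0 : A1 (p (pt i0 i1 e)))
    (ext : ∀ u : φ, f1 u (pt i0 i1 e) = a0) (i : I) :
    { a : A1 (p i) // (∀ u : φ, f1 u i = a) ∧ ∀ _ : i = pt i0 i1 e, HEq a a0 } := by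
  have gSpec : ∀ (_ : φ ∨ i = pt i0 i1 e) (j : I),
      ∃ x : A1 (p (conn cnx dsj e i j)),
        (∀ v : φ, f1 v (conn cnx dsj e i j) = x) ∧
        (∀ _ : i = pt i0 i1 e, HEq x a0) := by
    rintro (v | h) j
    · refine ⟨f1 v (conn cnx dsj e i j), fun v' => rfl, fun h => ?_⟩
      subst h
      refine HEq.trans (heq_app (f1 v) (conn_pt i0 i1 cnx dsj ax3 ax4 e j)) ?_
      rw [ext v]
    · subst h
      refine ⟨cast (congrArg (fun t => A1 (p t))
          (conn_pt i0 i1 cnx dsj ax3 ax4 e j).symm) a0, fun v => ?_, fun _ => cast_heq _ _⟩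
      refine eq_of_heq (HEq.trans (heq_app (f1 v) (conn_pt i0 i1 cnx dsj ax3 ax4 e j)) ?_)
      rw [ext v]
      exact (cast_heq _ _).symm
  have cψ : cof (φ ∨ i = pt i0 i1 e) := ax6 _ _ cφ (cof_eq_pt i0 i1 cof ax5 e i)
  have hbext : ∀ u : φ ∨ i = pt i0 i1 e,
      (gSpec u (pt i0 i1 e)).choose
        = cast (congrArg (fun t => A1 (p t)) (conn_e i0 i1 cnx dsj ax3 ax4 e i).symm) a0 := by
    intro u
    refine eq_of_heq (HEq.trans ?_ (cast_heq _ _).symm)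
    rcases u with v | h
    · rw [← (gSpec (Or.inl v) (pt i0 i1 e)).choose_spec.1 v]
      exact HEq.trans (heq_app (f1 v) (conn_e i0 i1 cnx dsj ax3 ax4 e i))
        (heq_of_eq (ext v))
    · exact (gSpec (Or.inr h) (pt i0 i1 e)).choose_spec.2 h
  have r := α1 e (fun j => p (conn cnx dsj e i j)) (φ ∨ i = pt i0 i1 e) cψ
    (fun u j => (gSpec u j).choose)
    (cast (congrArg (fun t => A1 (p t)) (conn_e i0 i1 cnx dsj ax3 ax4 e i).symm) a0) hbext
  refine ⟨cast (congrArg (fun t => A1 (p t)) (conn_ne i0 i1 cnx dsj ax3 ax4 e i)) r.val,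
    fun v => ?_, fun h => ?_⟩
  · exact eq_of_heq (HEq.trans (HEq.trans (HEq.trans
      (heq_app (f1 v) (conn_ne i0 i1 cnx dsj ax3 ax4 e i).symm)
      (heq_of_eq ((gSpec (Or.inl v) (pt i0 i1 (!e))).choose_spec.1 v)))
      (heq_of_eq (r.prop (Or.inl v)))) (cast_heq _ _).symm)
  · exact HEq.trans (HEq.trans (cast_heq _ _)
      (heq_of_eq (r.prop (Or.inr h)).symm))
      ((gSpec (Or.inr h) (pt i0 i1 (!e))).choose_spec.2 h)

end Aux

/-- Fibration structures lift through Σ-types, stably under reindexing. -/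
theorem fib_sigma (i0 i1 : I) (cof : Prop → Prop)
    (ax2 : i0 ≠ i1)
    (cnx dsj : I → I → I)
    (ax3 : ∀ x, cnx i0 x = i0 ∧ cnx x i0 = i0 ∧ cnx i1 x = x ∧ cnx x i1 = x)
    (ax4 : ∀ x, dsj i0 x = x ∧ dsj x i0 = x ∧ dsj i1 x = i1 ∧ dsj x i1 = i1)
    (ax5 : ∀ i : I, cof (i = i0) ∧ cof (i = i1))
    (ax6 : ∀ φ ψ : Prop, cof φ → cof ψ → cof (φ ∨ ψ)) :
    ∃ isFibSigma : {Γ : Type} → {A1 : Γ → Type} → {A2 : (Σ x : Γ, A1 x) → Type} →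
        isFib i0 i1 cof A1 → isFib i0 i1 cof A2 →
        isFib i0 i1 cof (fun x => Σ a1 : A1 x, A2 ⟨x, a1⟩),
      ∀ (Δ Γ : Type) (A1 : Γ → Type) (A2 : (Σ x : Γ, A1 x) → Type)
        (α1 : isFib i0 i1 cof A1) (α2 : isFib i0 i1 cof A2) (γ : Δ → Γ),
        reind i0 i1 cof γ (isFibSigma α1 α2) =
          isFibSigma (reind i0 i1 cof γ α1)
            (reind i0 i1 cof
              (fun y : Σ x : Δ, A1 (γ x) => (⟨γ y.1, y.2⟩ : Σ x : Γ, A1 x)) α2) := by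
  refine ⟨fun {Γ A1 A2} α1 α2 e p φ cφ f c0 ext => ?_, ?_⟩
  · have fl := fun i => fillA1 i0 i1 cof cnx dsj ax3 ax4 ax5 ax6 α1 e p φ cφ
      (fun v i => (f v i).1) c0.1 (fun v => congrArg Sigma.fst (ext v)) i
    have keq : (fl (pt i0 i1 e)).val = c0.1 := eq_of_heq ((fl (pt i0 i1 e)).2.2 rfl)
    have r2 := α2 e (fun i => (⟨p i, (fl i).val⟩ : Σ x : Γ, A1 x)) φ cφ
      (fun v i => cast (congrArg (fun a => A2 ⟨p i, a⟩) ((fl i).2.1 v)) (f v i).2)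
      (cast (congrArg (fun a => A2 ⟨p (pt i0 i1 e), a⟩) keq.symm) c0.2)
      (fun v => eq_of_heq (HEq.trans (HEq.trans (cast_heq _ _)
        (heq_snd (ext v))) (cast_heq _ _).symm))
    exact ⟨⟨(fl (pt i0 i1 (!e))).val, r2.val⟩, fun v =>
      Sigma.ext ((fl (pt i0 i1 (!e))).2.1 v)
        (HEq.trans (HEq.symm (cast_heq _ _)) (heq_of_eq (r2.prop v)))⟩
  · intro Δ Γ A1 A2 α1 α2 γ
    rfl

end CCHM
end

section
/- For every Γ : Type and families A1, A2 : Γ → Type, there is a function isFib⊕ : isFib A1 → isFib A2 → isFib (fun x => A1 x ⊕ A2 x), and it is stable under reindexing: for every γ : Δ → Γ, (isFib⊕ α1 α2)[γ] = isFib⊕ (α1[γ]) (α2[γ]). -/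
namespace CCHM

variable {I : Type}

theorem getLeft_eq {α β : Type} {x : α ⊕ β} {a : α} (h : x = Sum.inl a) (h' : x.isLeft) :
    x.getLeft h' = a := by subst h; rfl

theorem getRight_eq {α β : Type} {x : α ⊕ β} {b : β} (h : x = Sum.inr b) (h' : x.isRight) :
    x.getRight h' = b := by subst h; rfl

theorem inl_getLeft {α β : Type} {x : α ⊕ β} (h : x.isLeft) :
    Sum.inl (x.getLeft h) = x := by cases x <;> simp_all

theorem inr_getRight {α β : Type} {x : α ⊕ β} (h : x.isRight) :
    Sum.inr (x.getRight h) = x := by cases x <;> simp_all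

theorem allLeft {A B : I → Type}
    (ax1 : ∀ φ : I → Prop, (∀ i, φ i ∨ ¬ φ i) → (∀ i, φ i) ∨ (∀ i, ¬ φ i))
    (q : (i : I) → A i ⊕ B i) (e : I) (h : (q e).isLeft) : ∀ i, (q i).isLeft := by
  rcases ax1 (fun i => (q i).isLeft = true) (fun i => by
    rcases hq : q i with a | b
    · exact Or.inl (by rfl)
    · exact Or.inr (by exact fun h => nomatch h)) with h1 | h1
  · exact h1
  · exact absurd h (by simpa using h1 e)

theorem allRight {A B : I → Type}
    (ax1 : ∀ φ : I → Prop, (∀ i, φ i ∨ ¬ φ i) → (∀ i, φ i) ∨ (∀ i, ¬ φ i))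
    (q : (i : I) → A i ⊕ B i) (e : I) (h : (q e).isRight) : ∀ i, (q i).isRight := by
  rcases ax1 (fun i => (q i).isRight = true) (fun i => by
    rcases hq : q i with a | b
    · exact Or.inr (by exact fun h => nomatch h)
    · exact Or.inl (by rfl)) with h1 | h1
  · exact h1
  · exact absurd h (by simpa using h1 e)

def isFibSumDef (i0 i1 : I) (cof : Prop → Prop)
    (ax1 : ∀ φ : I → Prop, (∀ i, φ i ∨ ¬ φ i) → (∀ i, φ i) ∨ (∀ i, ¬ φ i))
    {Γ : Type} {A1 A2 : Γ → Type}
    (α1 : isFib i0 i1 cof A1) (α2 : isFib i0 i1 cof A2) :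
    isFib i0 i1 cof (fun x => A1 x ⊕ A2 x) :=
  fun e p φ cφ f a0 ext =>
    match a0, ext with
    | Sum.inl b0, ext =>
      let hall : ∀ u : φ, ∀ i, (f u i).isLeft :=
        fun u => allLeft ax1 (f u) (pt i0 i1 e) (by rw [ext u]; rfl)
      let f1 : φ → (i : I) → A1 (p i) := fun u i => (f u i).getLeft (hall u i)
      let r := α1 e p φ cφ f1 b0 (fun u => getLeft_eq (ext u) _)
      ⟨Sum.inl r.1, fun u => by
        rw [← inl_getLeft (hall u (pt i0 i1 (!e)))]
        exact congrArg Sum.inl (r.2 u)⟩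
    | Sum.inr b0, ext =>
      let hall : ∀ u : φ, ∀ i, (f u i).isRight :=
        fun u => allRight ax1 (f u) (pt i0 i1 e) (by rw [ext u]; rfl)
      let f2 : φ → (i : I) → A2 (p i) := fun u i => (f u i).getRight (hall u i)
      let r := α2 e p φ cφ f2 b0 (fun u => getRight_eq (ext u) _)
      ⟨Sum.inr r.1, fun u => by
        rw [← inr_getRight (hall u (pt i0 i1 (!e)))]
        exact congrArg Sum.inr (r.2 u)⟩

/-- Fibration structures lift through binary coproducts, stably under reindexing,
assuming the interval is internally connected (ax1). -/
theorem fib_coprod (i0 i1 : I) (cof : Prop → Prop)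
    (ax1 : ∀ φ : I → Prop, (∀ i, φ i ∨ ¬ φ i) → (∀ i, φ i) ∨ (∀ i, ¬ φ i)) :
    ∃ isFibSum : {Γ : Type} → {A1 A2 : Γ → Type} →
        isFib i0 i1 cof A1 → isFib i0 i1 cof A2 →
        isFib i0 i1 cof (fun x => A1 x ⊕ A2 x),
      ∀ (Δ Γ : Type) (A1 A2 : Γ → Type)
        (α1 : isFib i0 i1 cof A1) (α2 : isFib i0 i1 cof A2) (γ : Δ → Γ),
        reind i0 i1 cof γ (isFibSum α1 α2) =
          isFibSum (reind i0 i1 cof γ α1) (reind i0 i1 cof γ α2) :=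
  ⟨fun {Γ A1 A2} α1 α2 => isFibSumDef i0 i1 cof ax1 α1 α2,
   fun _ _ _ _ _ _ _ => by funext e p φ cφ f a0 ext; cases a0 <;> rfl⟩

end CCHM
end

section
/- For every Γ : Type and A : Γ → Type there is a function isFibPath : isFib A → isFib (Path A), and it is stable under reindexing: for every γ : Δ → Γ, (isFibPath α)[γ ×'' id] = isFibPath (α[γ]), where γ ×'' id : (Σ x : Δ, A (γ x) × A (γ x)) → (Σ x : Γ, A x × A x) sends ⟨x, c⟩ to ⟨γ x, c⟩. -/
namespace CCHM

variable {I : Type}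

/-- The type of paths from `a0` to `a1` in `X`. -/
def PathT (i0 i1 : I) (X : Type) (a0 a1 : X) : Type :=
  { p : I → X // p i0 = a0 ∧ p i1 = a1 }

/-- The family of path types associated with a family `A : Γ → Type`. -/
def PathFam (i0 i1 : I) {Γ : Type} (A : Γ → Type) : (Σ x : Γ, A x × A x) → Type :=
  fun y => PathT i0 i1 (A y.1) y.2.1 y.2.2


open Classical in
/-- The path-type composition structure built from a composition structure on `A`. -/
noncomputable def isFibPathAux (i0 i1 : I) (cof : Prop → Prop)
    (ax2 : i0 ≠ i1)
    (ax5 : ∀ i : I, cof (i = i0) ∧ cof (i = i1))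
    (ax6 : ∀ φ ψ : Prop, cof φ → cof ψ → cof (φ ∨ ψ))
    {Γ : Type} {A : Γ → Type} (α : isFib i0 i1 cof A) :
    isFib i0 i1 cof (PathFam i0 i1 A) :=
  fun e p φ hφ f a0 ha0 =>
    let q : I → Γ := fun i => (p i).1
    let g : (j : I) → (φ ∨ j = i0 ∨ j = i1) → (i : I) → A (q i) :=
      fun j _ i => if h : φ then (f h i).1 j
        else if _ : j = i0 then (p i).2.1 else (p i).2.2
    let b : (j : I) → {a1 : A (q (pt i0 i1 (!e))) //
        ∀ u : (φ ∨ j = i0 ∨ j = i1), g j u (pt i0 i1 (!e)) = a1} :=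
      fun j => α e q (φ ∨ j = i0 ∨ j = i1)
        (ax6 _ _ hφ (ax6 _ _ (ax5 j).1 (ax5 j).2))
        (g j) (a0.1 j)
        (by
          intro u
          by_cases h : φ
          · show (if h' : φ then (f h' (pt i0 i1 e)).1 j else _) = a0.1 j
            rw [dif_pos h, ha0 h]
          · show (if h' : φ then (f h' (pt i0 i1 e)).1 j else
              if _ : j = i0 then (p (pt i0 i1 e)).2.1 else (p (pt i0 i1 e)).2.2) = a0.1 j
            rw [dif_neg h]
            rcases u.resolve_left h with h0 | h1
            · subst h0; rw [dif_pos rfl]; exact a0.2.1.symm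
            · subst h1; rw [dif_neg (Ne.symm ax2)]; exact a0.2.2.symm)
    ⟨⟨fun j => (b j).1,
      by
        constructor
        · have h1 := (b i0).2 (Or.inr (Or.inl rfl))
          show (b i0).1 = _
          rw [← h1]
          by_cases h : φ
          · show (if h' : φ then (f h' _).1 i0 else _) = _
            rw [dif_pos h]; exact (f h _).2.1
          · show (if h' : φ then (f h' _).1 i0 else
              if _ : (i0:I) = i0 then _ else _) = _
            rw [dif_neg h, dif_pos rfl]
        · have h1 := (b i1).2 (Or.inr (Or.inr rfl))
          show (b i1).1 = _
          rw [← h1]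
          by_cases h : φ
          · show (if h' : φ then (f h' _).1 i1 else _) = _
            rw [dif_pos h]; exact (f h _).2.2
          · show (if h' : φ then (f h' _).1 i1 else
              if _ : (i1:I) = i0 then _ else _) = _
            rw [dif_neg h, dif_neg (Ne.symm ax2)]⟩,
      by
        intro u
        apply Subtype.ext
        funext j
        have h1 := (b j).2 (Or.inl u)
        show _ = (b j).1
        rw [← h1]
        show _ = (if h' : φ then (f h' _).1 j else _)
        rw [dif_pos u]⟩

/-- Fibration structures lift through path types, stably under reindexing. -/
theorem fib_path (i0 i1 : I) (cof : Prop → Prop)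
    (ax2 : i0 ≠ i1)
    (ax5 : ∀ i : I, cof (i = i0) ∧ cof (i = i1))
    (ax6 : ∀ φ ψ : Prop, cof φ → cof ψ → cof (φ ∨ ψ)) :
    ∃ isFibPath : {Γ : Type} → {A : Γ → Type} →
        isFib i0 i1 cof A → isFib i0 i1 cof (PathFam i0 i1 A),
      ∀ (Δ Γ : Type) (A : Γ → Type) (α : isFib i0 i1 cof A) (γ : Δ → Γ),
        reind i0 i1 cof
            (fun y : Σ x : Δ, A (γ x) × A (γ x) => (⟨γ y.1, y.2⟩ : Σ x : Γ, A x × A x))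
            (isFibPath α) =
          isFibPath (reind i0 i1 cof γ α) := by
  exact ⟨fun {Γ A} α => isFibPathAux i0 i1 cof ax2 ax5 ax6 α,
    fun Δ Γ A α γ => rfl⟩

end CCHM
end

section
/- Define Id A : (Σ x : Γ, A x × A x) → Type by Id A (x, (a0, a1)) := Σ p : (a0 ⇝ a1), {φ : Prop // cof φ ∧ (φ → ∀ i, p.1 i = a0)}. Then: (i) for every Γ and A : Γ → Type there is isFibId : isFib A → isFib (Id A); (ii) with refl a : Id A (x, (a, a)) given by the constant path at a paired with the proposition True, there is an eliminator J assigning to every x : Γ, a0 : A x, family B : (Σ a : A x, Id A (x, (a0, a))) → Type with β : isFib B, a1 : A x, e : Id A (x, (a0, a1)) and b : B ⟨a0, refl a0⟩ an element J A x a0 B β a1 e b : B ⟨a1, e⟩, satisfying the computation rule J A x a0 B β a0 (refl a0) b = b. -/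
namespace CCHM

variable {I : Type}

/-- Swan-style identity types: a path together with a cofibrant proposition
forcing the path to be constant. -/
def IdFam (i0 i1 : I) (cof : Prop → Prop) {Γ : Type} (A : Γ → Type) :
    (Σ x : Γ, A x × A x) → Type :=
  fun y => Σ p : PathT i0 i1 (A y.1) y.2.1 y.2.2,
    { φ : Prop // cof φ ∧ (φ → ∀ i, p.1 i = y.2.1) }

/-- Reflexivity: the constant path together with the proposition `True`. -/
def reflId (i0 i1 : I) (cof : Prop → Prop) (hT : cof True) {Γ : Type} {A : Γ → Type}
    (x : Γ) (a : A x) : IdFam i0 i1 cof A ⟨x, (a, a)⟩ :=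
  ⟨⟨fun _ => a, rfl, rfl⟩, ⟨True, hT, fun _ _ => rfl⟩⟩

/-! ### Auxiliary lemmas -/

theorem cofEq (cof : Prop → Prop) {φ ψ : Prop} (h : φ ↔ ψ) (hc : cof φ) : cof ψ :=
  (propext h) ▸ hc

theorem idEq (i0 i1 : I) (cof : Prop → Prop) {Γ : Type} {A : Γ → Type}
    {y : Σ x : Γ, A x × A x} (q r : IdFam i0 i1 cof A y)
    (hp : q.1.1 = r.1.1) (hφ : q.2.1 ↔ r.2.1) : q = r := by
  obtain ⟨⟨p1, h1⟩, ⟨φ1, c1⟩⟩ := q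
  obtain ⟨⟨p2, h2⟩, ⟨φ2, c2⟩⟩ := r
  dsimp only at hp hφ
  subst hp
  have h : φ1 = φ2 := propext hφ
  subst h
  rfl

theorem idSigEq (i0 i1 : I) (cof : Prop → Prop) {Γ : Type} {A : Γ → Type} {x : Γ} {a0 : A x}
    {a a' : A x} (h : a = a') (u : IdFam i0 i1 cof A ⟨x, (a0, a)⟩)
    (v : IdFam i0 i1 cof A ⟨x, (a0, a')⟩)
    (hp : u.1.1 = v.1.1) (hφ : u.2.1 ↔ v.2.1) :
    (⟨a, u⟩ : Σ b : A x, IdFam i0 i1 cof A ⟨x, (a0, b)⟩) = ⟨a', v⟩ := by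
  subst h
  exact congrArg _ (idEq i0 i1 cof u v hp hφ)

/-! ### Fibrancy of Id -/

open Classical in
noncomputable def fjAux (i0 i1 : I) (cof : Prop → Prop) {Γ : Type} {A : Γ → Type}
    (p : I → Σ x : Γ, A x × A x) (φ : Prop)
    (f : φ → (i : I) → IdFam i0 i1 cof A (p i)) (j : I)
    (u : φ ∨ (j = i0 ∨ j = i1)) (i : I) : A (p i).1 :=
  if v : φ then (f v i).1.1 j
  else if _ : j = i0 then (p i).2.1
  else if _ : j = i1 then (p i).2.2
  else absurd u (fun u => u.elim v (fun w => w.elim ‹¬(j = i0)› ‹¬(j = i1)›))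

theorem fjAux_pos (i0 i1 : I) (cof : Prop → Prop) {Γ : Type} {A : Γ → Type}
    (p : I → Σ x : Γ, A x × A x) (φ : Prop)
    (f : φ → (i : I) → IdFam i0 i1 cof A (p i)) (j : I)
    (u : φ ∨ (j = i0 ∨ j = i1)) (i : I) (v : φ) :
    fjAux i0 i1 cof p φ f j u i = (f v i).1.1 j := by
  unfold fjAux; rw [dif_pos v]

theorem fjAux_e0 (i0 i1 : I) (cof : Prop → Prop) {Γ : Type} {A : Γ → Type}
    (p : I → Σ x : Γ, A x × A x) (φ : Prop)
    (f : φ → (i : I) → IdFam i0 i1 cof A (p i)) (j : I)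
    (u : φ ∨ (j = i0 ∨ j = i1)) (i : I) (hv : ¬φ) (h0 : j = i0) :
    fjAux i0 i1 cof p φ f j u i = (p i).2.1 := by
  unfold fjAux; rw [dif_neg hv, dif_pos h0]

theorem fjAux_e1 (i0 i1 : I) (cof : Prop → Prop) {Γ : Type} {A : Γ → Type}
    (p : I → Σ x : Γ, A x × A x) (φ : Prop)
    (f : φ → (i : I) → IdFam i0 i1 cof A (p i)) (j : I)
    (u : φ ∨ (j = i0 ∨ j = i1)) (i : I) (hv : ¬φ) (h0 : ¬(j = i0)) (h1 : j = i1) :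
    fjAux i0 i1 cof p φ f j u i = (p i).2.2 := by
  unfold fjAux; rw [dif_neg hv, dif_neg h0, dif_pos h1]

noncomputable def fibId (i0 i1 : I) (cof : Prop → Prop)
    (ax2 : i0 ≠ i1)
    (ax5 : ∀ i : I, cof (i = i0) ∧ cof (i = i1))
    (ax6 : ∀ φ ψ : Prop, cof φ → cof ψ → cof (φ ∨ ψ))
    (ax7 : ∀ φ ψ : Prop, cof φ → (φ → cof ψ) → cof (φ ∧ ψ))
    {Γ : Type} {A : Γ → Type} (α : isFib i0 i1 cof A) :
    isFib i0 i1 cof (IdFam i0 i1 cof A) := by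
  intro e p φ hφ f q0 hq0
  let e0 := pt i0 i1 e
  let e1 := pt i0 i1 (!e)
  -- the composition in A, for each path coordinate j
  have r : (j : I) → {a1 : A (p e1).1 //
      ∀ u : φ ∨ (j = i0 ∨ j = i1), fjAux i0 i1 cof p φ f j u e1 = a1} := by
    intro j
    refine α e (fun i => (p i).1) (φ ∨ (j = i0 ∨ j = i1))
      (ax6 _ _ hφ (ax6 _ _ (ax5 j).1 (ax5 j).2)) (fjAux i0 i1 cof p φ f j)
      (q0.1.1 j) ?_
    intro u
    by_cases v : φ
    · rw [fjAux_pos i0 i1 cof p φ f j u e0 v]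
      exact congrFun (congrArg (fun z => z.1.1) (hq0 v)) j
    · rcases u with v' | h0 | h1
      · exact absurd v' v
      · rw [fjAux_e0 i0 i1 cof p φ f j (Or.inr (Or.inl h0)) e0 v h0, h0]
        exact q0.1.2.1.symm
      · by_cases h0 : j = i0
        · rw [fjAux_e0 i0 i1 cof p φ f j (Or.inr (Or.inl h0)) e0 v h0, h0]
          exact q0.1.2.1.symm
        · rw [fjAux_e1 i0 i1 cof p φ f j (Or.inr (Or.inr h1)) e0 v h0 h1, h1]
          exact q0.1.2.2.symm
  -- endpoints of the composed path
  have ep0 : (r i0).1 = (p e1).2.1 := by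
    rw [← (r i0).2 (Or.inr (Or.inl rfl))]
    by_cases v : φ
    · rw [fjAux_pos i0 i1 cof p φ f i0 _ e1 v]
      exact (f v e1).1.2.1
    · rw [fjAux_e0 i0 i1 cof p φ f i0 _ e1 v rfl]
  have ep1 : (r i1).1 = (p e1).2.2 := by
    rw [← (r i1).2 (Or.inr (Or.inr rfl))]
    by_cases v : φ
    · rw [fjAux_pos i0 i1 cof p φ f i1 _ e1 v]
      exact (f v e1).1.2.2
    · rw [fjAux_e1 i0 i1 cof p φ f i1 _ e1 v (fun h => ax2 h.symm) rfl]
  -- the new element with its constancy proposition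
  refine ⟨⟨⟨fun j => (r j).1, ep0, ep1⟩,
    ⟨φ ∧ ∀ v : φ, (f v e1).2.1, ?_, ?_⟩⟩, ?_⟩
  · exact ax7 _ _ hφ (fun v =>
      cofEq cof ⟨fun h _ => h, fun h => h v⟩ (f v e1).2.2.1)
  · rintro ⟨v, hall⟩ j
    show (r j).1 = (p e1).2.1
    rw [← (r j).2 (Or.inl v), fjAux_pos i0 i1 cof p φ f j (Or.inl v) e1 v]
    exact (f v e1).2.2.2 (hall v) j
  · intro v
    refine idEq i0 i1 cof _ _ (funext fun j => ?_)
      ⟨fun h => ⟨v, fun _ => h⟩, fun h => h.2 v⟩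
    have h := (r j).2 (Or.inl v)
    rw [fjAux_pos i0 i1 cof p φ f j (Or.inl v) e1 v] at h
    exact h

/-! ### The J eliminator -/

def Jq (i0 i1 : I) (cof : Prop → Prop) (cnx : I → I → I)
    (ax3 : ∀ x, cnx i0 x = i0 ∧ cnx x i0 = i0 ∧ cnx i1 x = x ∧ cnx x i1 = x)
    (ax5 : ∀ i : I, cof (i = i0) ∧ cof (i = i1))
    (ax6 : ∀ φ ψ : Prop, cof φ → cof ψ → cof (φ ∨ ψ))
    {Γ : Type} {A : Γ → Type} {x : Γ} {a0 a1 : A x}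
    (e : IdFam i0 i1 cof A ⟨x, (a0, a1)⟩) (i : I) :
    Σ a : A x, IdFam i0 i1 cof A ⟨x, (a0, a)⟩ :=
  ⟨e.1.1 i,
    ⟨⟨fun j => e.1.1 (cnx i j),
      by show e.1.1 (cnx i i0) = a0; rw [(ax3 i).2.1]; exact e.1.2.1,
      by show e.1.1 (cnx i i1) = e.1.1 i; rw [(ax3 i).2.2.2]⟩,
     ⟨(i = i0) ∨ e.2.1, ax6 _ _ (ax5 i).1 e.2.2.1,
      fun u j => u.elim
        (fun h => by show e.1.1 (cnx i j) = a0; rw [h, (ax3 j).1]; exact e.1.2.1)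
        (fun v => e.2.2.2 v (cnx i j))⟩⟩⟩

theorem JEi (i0 i1 : I) (cof : Prop → Prop) (hT : cof True) (cnx : I → I → I)
    (ax3 : ∀ x, cnx i0 x = i0 ∧ cnx x i0 = i0 ∧ cnx i1 x = x ∧ cnx x i1 = x)
    (ax5 : ∀ i : I, cof (i = i0) ∧ cof (i = i1))
    (ax6 : ∀ φ ψ : Prop, cof φ → cof ψ → cof (φ ∨ ψ))
    {Γ : Type} {A : Γ → Type} {x : Γ} {a0 a1 : A x}
    (e : IdFam i0 i1 cof A ⟨x, (a0, a1)⟩) (i : I) (v : e.2.1) :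
    Jq i0 i1 cof cnx ax3 ax5 ax6 e i = ⟨a0, reflId i0 i1 cof hT x a0⟩ :=
  idSigEq i0 i1 cof (e.2.2.2 v i) _ _
    (funext fun j => e.2.2.2 v (cnx i j))
    ⟨fun _ => trivial, fun _ => Or.inr v⟩

theorem JE0 (i0 i1 : I) (cof : Prop → Prop) (hT : cof True) (cnx : I → I → I)
    (ax3 : ∀ x, cnx i0 x = i0 ∧ cnx x i0 = i0 ∧ cnx i1 x = x ∧ cnx x i1 = x)
    (ax5 : ∀ i : I, cof (i = i0) ∧ cof (i = i1))
    (ax6 : ∀ φ ψ : Prop, cof φ → cof ψ → cof (φ ∨ ψ))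
    {Γ : Type} {A : Γ → Type} {x : Γ} {a0 a1 : A x}
    (e : IdFam i0 i1 cof A ⟨x, (a0, a1)⟩) :
    Jq i0 i1 cof cnx ax3 ax5 ax6 e i0 = ⟨a0, reflId i0 i1 cof hT x a0⟩ :=
  idSigEq i0 i1 cof e.1.2.1 _ _
    (funext fun j => by show e.1.1 (cnx i0 j) = a0; rw [(ax3 j).1]; exact e.1.2.1)
    ⟨fun _ => trivial, fun _ => Or.inl rfl⟩

theorem JE1 (i0 i1 : I) (cof : Prop → Prop) (ax2 : i0 ≠ i1) (cnx : I → I → I)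
    (ax3 : ∀ x, cnx i0 x = i0 ∧ cnx x i0 = i0 ∧ cnx i1 x = x ∧ cnx x i1 = x)
    (ax5 : ∀ i : I, cof (i = i0) ∧ cof (i = i1))
    (ax6 : ∀ φ ψ : Prop, cof φ → cof ψ → cof (φ ∨ ψ))
    {Γ : Type} {A : Γ → Type} {x : Γ} {a0 a1 : A x}
    (e : IdFam i0 i1 cof A ⟨x, (a0, a1)⟩) :
    Jq i0 i1 cof cnx ax3 ax5 ax6 e i1 = ⟨a1, e⟩ :=
  idSigEq i0 i1 cof e.1.2.2 _ _
    (funext fun j => by show e.1.1 (cnx i1 j) = e.1.1 j; rw [(ax3 j).2.2.1])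
    ⟨fun h => h.elim (fun h' => absurd h'.symm ax2) id, Or.inr⟩

def Jdef (i0 i1 : I) (cof : Prop → Prop) (hT : cof True) (ax2 : i0 ≠ i1) (cnx : I → I → I)
    (ax3 : ∀ x, cnx i0 x = i0 ∧ cnx x i0 = i0 ∧ cnx i1 x = x ∧ cnx x i1 = x)
    (ax5 : ∀ i : I, cof (i = i0) ∧ cof (i = i1))
    (ax6 : ∀ φ ψ : Prop, cof φ → cof ψ → cof (φ ∨ ψ))
    (Γ : Type) (A : Γ → Type) (x : Γ) (a0 : A x)
    (B : (Σ a : A x, IdFam i0 i1 cof A ⟨x, (a0, a)⟩) → Type)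
    (β : isFib i0 i1 cof B) (a1 : A x) (e : IdFam i0 i1 cof A ⟨x, (a0, a1)⟩)
    (b : B ⟨a0, reflId i0 i1 cof hT x a0⟩) : B ⟨a1, e⟩ :=
  cast (congrArg B (JE1 i0 i1 cof ax2 cnx ax3 ax5 ax6 e))
    (β false (Jq i0 i1 cof cnx ax3 ax5 ax6 e) e.2.1 e.2.2.1
      (fun v i => cast (congrArg B (JEi i0 i1 cof hT cnx ax3 ax5 ax6 e i v)).symm b)
      (cast (congrArg B (JE0 i0 i1 cof hT cnx ax3 ax5 ax6 e)).symm b)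
      (fun _ => rfl)).1

theorem compCast {C D : Type} (hU : C = D) (hD : D = C) {φt : Prop} (v : φt) (b : C)
    (g : φt → D) (s : {y : D // ∀ u : φt, g u = y}) (hg : g v = cast hU b) :
    cast hD s.1 = b := by
  rw [← s.2 v, hg, cast_cast, cast_eq]

theorem Jcomp (i0 i1 : I) (cof : Prop → Prop) (hT : cof True) (ax2 : i0 ≠ i1) (cnx : I → I → I)
    (ax3 : ∀ x, cnx i0 x = i0 ∧ cnx x i0 = i0 ∧ cnx i1 x = x ∧ cnx x i1 = x)
    (ax5 : ∀ i : I, cof (i = i0) ∧ cof (i = i1))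
    (ax6 : ∀ φ ψ : Prop, cof φ → cof ψ → cof (φ ∨ ψ))
    (Γ : Type) (A : Γ → Type) (x : Γ) (a0 : A x)
    (B : (Σ a : A x, IdFam i0 i1 cof A ⟨x, (a0, a)⟩) → Type)
    (β : isFib i0 i1 cof B) (b : B ⟨a0, reflId i0 i1 cof hT x a0⟩) :
    Jdef i0 i1 cof hT ax2 cnx ax3 ax5 ax6 Γ A x a0 B β a0
      (reflId i0 i1 cof hT x a0) b = b := by
  unfold Jdef
  exact compCast _ _ trivial b _ _ rfl

/-- Identity types: the families `IdFam` are fibrant and support the Martin-Löf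
identity eliminator `J` with a definitional computation rule. -/
theorem fib_id (i0 i1 : I) (cof : Prop → Prop)
    (ax2 : i0 ≠ i1)
    (cnx dsj : I → I → I)
    (ax3 : ∀ x, cnx i0 x = i0 ∧ cnx x i0 = i0 ∧ cnx i1 x = x ∧ cnx x i1 = x)
    (ax4 : ∀ x, dsj i0 x = x ∧ dsj x i0 = x ∧ dsj i1 x = i1 ∧ dsj x i1 = i1)
    (ax5 : ∀ i : I, cof (i = i0) ∧ cof (i = i1))
    (ax6 : ∀ φ ψ : Prop, cof φ → cof ψ → cof (φ ∨ ψ))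
    (ax7 : ∀ φ ψ : Prop, cof φ → (φ → cof ψ) → cof (φ ∧ ψ)) :
    ∃ hT : cof True,
    ∃ _isFibId : {Γ : Type} → {A : Γ → Type} →
        isFib i0 i1 cof A → isFib i0 i1 cof (IdFam i0 i1 cof A),
    ∃ J : (Γ : Type) → (A : Γ → Type) → (x : Γ) → (a0 : A x) →
        (B : (Σ a : A x, IdFam i0 i1 cof A ⟨x, (a0, a)⟩) → Type) →
        isFib i0 i1 cof B → (a1 : A x) → (e : IdFam i0 i1 cof A ⟨x, (a0, a1)⟩) →
        B ⟨a0, reflId i0 i1 cof hT x a0⟩ → B ⟨a1, e⟩,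
      ∀ (Γ : Type) (A : Γ → Type) (x : Γ) (a0 : A x)
        (B : (Σ a : A x, IdFam i0 i1 cof A ⟨x, (a0, a)⟩) → Type)
        (β : isFib i0 i1 cof B) (b : B ⟨a0, reflId i0 i1 cof hT x a0⟩),
        J Γ A x a0 B β a0 (reflId i0 i1 cof hT x a0) b = b := by
  have hT : cof True := by
    have h := (ax5 i0).1
    rwa [show (i0 = i0) = True from propext ⟨fun _ => trivial, fun _ => rfl⟩] at h
  exact ⟨hT,
    fun {Γ} {A} α => fibId i0 i1 cof ax2 ax5 ax6 ax7 α,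
    fun Γ A x a0 B β a1 e b =>
      Jdef i0 i1 cof hT ax2 cnx ax3 ax5 ax6 Γ A x a0 B β a1 e b,
    fun Γ A x a0 B β b =>
      Jcomp i0 i1 cof hT ax2 cnx ax3 ax5 ax6 Γ A x a0 B β b⟩

end CCHM
end

section
/- For every Γ : Type and A : Γ → Type: (i) from an extension structure ε : Ext A one can construct both a fibration structure in isFib A and a pointwise contractibility structure (x : Γ) → Contr (A x); (ii) conversely, from a fibration structure α : isFib A and a pointwise contractibility structure (x : Γ) → Contr (A x) one can construct an extension structure ε : Ext A. -/
namespace CCHM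

variable {I : Type}

/-- Contractibility structure. -/
def Contr (i0 i1 : I) (X : Type) : Type :=
  Σ x0 : X, (x : X) → PathT i0 i1 X x0 x

/-- Extension structure: every cofibrant partial element extends to a total one. -/
def Ext (cof : Prop → Prop) (X : Type) : Type :=
  (φ : Prop) → cof φ → (f : φ → X) → { x : X // ∀ u : φ, f u = x }

/-- Extension structures on a family correspond exactly to having both a fibration
structure and a pointwise contractibility structure. -/
theorem ext_iff_fib_and_contr (i0 i1 : I) (cof : Prop → Prop)
    (ax2 : i0 ≠ i1)
    (ax5 : ∀ i : I, cof (i = i0) ∧ cof (i = i1))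
    (Γ : Type) (A : Γ → Type) :
    Nonempty
      ((((x : Γ) → Ext cof (A x)) →
          isFib i0 i1 cof A × ((x : Γ) → Contr i0 i1 (A x))) ×
        (isFib i0 i1 cof A → ((x : Γ) → Contr i0 i1 (A x)) →
          (x : Γ) → Ext cof (A x))) := by
  constructor
  constructor
  · intro ε
    refine ⟨fun e p φ cφ f a0 _ => ε (p (pt i0 i1 (!e))) φ cφ (fun u => f u (pt i0 i1 (!e))), ?_⟩
    intro x
    refine ⟨(ε x (i0 = i1) (ax5 i0).2 (fun u => (ax2 u).elim)).1, fun a => ?_⟩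
    refine ⟨fun i => (ε x (i = i1) (ax5 i).2 (fun _ => a)).1, ?_, ?_⟩
    · have : (fun (_ : i0 = i1) => a) = (fun u : i0 = i1 => (ax2 u).elim) := by
        funext u; exact (ax2 u).elim
      exact congrArg (fun g => (ε x (i0 = i1) (ax5 i0).2 g).1) this
    · exact ((ε x (i1 = i1) (ax5 i1).2 (fun _ => a)).2 rfl).symm
  · intro α κ x φ cφ f
    obtain ⟨x0, ctr⟩ := κ x
    obtain ⟨a1, h1⟩ := α false (fun _ => x) φ cφ (fun u => (ctr (f u)).1) x0
      (fun u => (ctr (f u)).2.1)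
    exact ⟨a1, fun u => ((ctr (f u)).2.2).symm.trans (h1 u)⟩


end CCHM
end

section
/- Given Γ : Type, Φ : Γ → Prop with cof (Φ x) for all x, ι : Γ|Φ → Γ the first projection, a family G : Γ → Type, a fibration structure α : isFib (G ∘ ι) and a fibration structure γ : isFib G, there exists a fibration structure γ' : isFib G such that γ'[ι] = α. -/
namespace CCHM

variable {I : Type}

/-! ### Auxiliary machinery -/

theorem hcongr_fun {κ : Sort*} {A : κ → Sort*} (g : ∀ k, A k) {k k' : κ} (h : k = k') :
    HEq (g k) (g k') := by subst h; rfl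

theorem orElim_ex {X : Type} {A B : Prop} (f : A → X) (g : B → X)
    (h : ∀ a b, f a = g b) (v : A ∨ B) :
    ∃ x : X, (∀ a, f a = x) ∧ (∀ b, g b = x) :=
  v.elim (fun a => ⟨f a, fun a' => congrArg f (Subsingleton.elim a' a), fun b => (h a b).symm⟩)
    (fun b => ⟨g b, fun a => h a b, fun b' => congrArg g (Subsingleton.elim b' b)⟩)

/-- Eliminate a disjunction of propositions into a type, given compatible branches. -/
noncomputable def orElim {X : Type} {A B : Prop} (f : A → X) (g : B → X)
    (h : ∀ a b, f a = g b) (v : A ∨ B) : X :=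
  Classical.choose (orElim_ex f g h v)

theorem orElim_left {X : Type} {A B : Prop} (f : A → X) (g : B → X)
    (h : ∀ a b, f a = g b) (v : A ∨ B) (a : A) : orElim f g h v = f a :=
  ((Classical.choose_spec (orElim_ex f g h v)).1 a).symm

theorem orElim_right {X : Type} {A B : Prop} (f : A → X) (g : B → X)
    (h : ∀ a b, f a = g b) (v : A ∨ B) (b : B) : orElim f g h v = g b :=
  ((Classical.choose_spec (orElim_ex f g h v)).2 b).symm

/-- Cast within a family reindexed along a path. -/
def fcast {Δ : Type} (A : Δ → Type) (q : I → Δ) {k k' : I} (h : k = k') (x : A (q k)) :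
    A (q k') := cast (congrArg (fun k => A (q k)) h) x

theorem fcast_heq {Δ : Type} (A : Δ → Type) (q : I → Δ) {k k' : I} (h : k = k')
    (x : A (q k)) : HEq (fcast A q h x) x := cast_heq _ _

/-- Composition structures respect (propositional) equality of all data. -/
theorem comp_congr (i0 i1 : I) (cof : Prop → Prop) {Δ : Type} {A : Δ → Type}
    (β : isFib i0 i1 cof A) (e : Bool) {q q' : I → Δ} (hq : q = q')
    {φ φ' : Prop} (hφ : φ = φ') (cφ : cof φ) (cφ' : cof φ')
    {f : φ → ∀ i, A (q i)} {f' : φ' → ∀ i, A (q' i)} (hf : HEq f f')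
    {a0 : A (q (pt i0 i1 e))} {a0' : A (q' (pt i0 i1 e))} (ha : HEq a0 a0')
    (ext : ∀ u, f u (pt i0 i1 e) = a0) (ext' : ∀ u, f' u (pt i0 i1 e) = a0') :
    HEq (β e q φ cφ f a0 ext).val (β e q' φ' cφ' f' a0' ext').val := by
  subst hq; subst hφ; cases hf; cases ha; rfl

/-! ### Connections and filling -/

/-- Connection in direction `e`: `cn false = ⊓`, `cn true = ⊔`. -/
def cn (cnx dsj : I → I → I) : Bool → I → I → I := fun e => bif e then dsj else cnx

section Conn

variable (i0 i1 : I) (cnx dsj : I → I → I)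
  (ax3 : ∀ x, cnx i0 x = i0 ∧ cnx x i0 = i0 ∧ cnx i1 x = x ∧ cnx x i1 = x)
  (ax4 : ∀ x, dsj i0 x = x ∧ dsj x i0 = x ∧ dsj i1 x = i1 ∧ dsj x i1 = i1)

include ax3 ax4

theorem cnL1 (e : Bool) (i : I) : cn cnx dsj e i (pt i0 i1 e) = pt i0 i1 e := by
  cases e
  · exact (ax3 i).2.1
  · exact (ax4 i).2.2.2

theorem cnL2 (e : Bool) (i : I) : cn cnx dsj e i (pt i0 i1 (!e)) = i := by
  cases e
  · exact (ax3 i).2.2.2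
  · exact (ax4 i).2.1

theorem cnL3 (e : Bool) (j : I) : cn cnx dsj e (pt i0 i1 e) j = pt i0 i1 e := by
  cases e
  · exact (ax3 j).1
  · exact (ax4 j).2.2.1

theorem cnL4 (e : Bool) (j : I) : cn cnx dsj e (pt i0 i1 (!e)) j = j := by
  cases e
  · exact (ax3 j).2.2.1
  · exact (ax4 j).1

end Conn

theorem cof_pt (i0 i1 : I) (cof : Prop → Prop)
    (ax5 : ∀ i : I, cof (i = i0) ∧ cof (i = i1)) (i : I) (e : Bool) :
    cof (i = pt i0 i1 e) := by
  cases e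
  · exact (ax5 i).1
  · exact (ax5 i).2

section Fill

variable (i0 i1 : I) (cof : Prop → Prop) {Δ : Type} (A : Δ → Type)
  (cnx dsj : I → I → I)
  (ax3 : ∀ x, cnx i0 x = i0 ∧ cnx x i0 = i0 ∧ cnx i1 x = x ∧ cnx x i1 = x)
  (ax4 : ∀ x, dsj i0 x = x ∧ dsj x i0 = x ∧ dsj i1 x = i1 ∧ dsj x i1 = i1)
  (ax5 : ∀ i : I, cof (i = i0) ∧ cof (i = i1))
  (ax6 : ∀ φ ψ : Prop, cof φ → cof ψ → cof (φ ∨ ψ))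

/-- The partial element used to define the filler at level `i`. -/
noncomputable def fillPartial (e : Bool) (q : I → Δ) (φ : Prop)
    (f : φ → ∀ i, A (q i)) (a0 : A (q (pt i0 i1 e)))
    (ext : ∀ u : φ, f u (pt i0 i1 e) = a0) (i : I) :
    (φ ∨ i = pt i0 i1 e) → ∀ j, A (q (cn cnx dsj e i j)) :=
  orElim (fun u j => f u (cn cnx dsj e i j))
    (fun hi j => fcast A q
      (show cn cnx dsj e i j = pt i0 i1 e by
        rw [hi]; exact cnL3 i0 i1 cnx dsj ax3 ax4 e j).symm a0)
    (fun u hi => funext fun j =>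
      eq_of_heq ((hcongr_fun (f u)
          (show cn cnx dsj e i j = pt i0 i1 e by
            rw [hi]; exact cnL3 i0 i1 cnx dsj ax3 ax4 e j)).trans
        ((heq_of_eq (ext u)).trans (fcast_heq A q _ a0).symm)))

theorem fillPartial_left (e : Bool) (q : I → Δ) (φ : Prop)
    (f : φ → ∀ i, A (q i)) (a0 : A (q (pt i0 i1 e)))
    (ext : ∀ u : φ, f u (pt i0 i1 e) = a0) (i : I)
    (v : φ ∨ i = pt i0 i1 e) (u : φ) :
    fillPartial i0 i1 A cnx dsj ax3 ax4 e q φ f a0 ext i v =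
      fun j => f u (cn cnx dsj e i j) :=
  orElim_left _ _ _ _ u

theorem fillPartial_right (e : Bool) (q : I → Δ) (φ : Prop)
    (f : φ → ∀ i, A (q i)) (a0 : A (q (pt i0 i1 e)))
    (ext : ∀ u : φ, f u (pt i0 i1 e) = a0) (i : I)
    (v : φ ∨ i = pt i0 i1 e) (hi : i = pt i0 i1 e) :
    fillPartial i0 i1 A cnx dsj ax3 ax4 e q φ f a0 ext i v =
      fun j => fcast A q
        (show cn cnx dsj e i j = pt i0 i1 e by
          rw [hi]; exact cnL3 i0 i1 cnx dsj ax3 ax4 e j).symm a0 :=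
  orElim_right _ _ _ _ hi

variable (β : isFib i0 i1 cof A)

/-- The composition producing the filler at level `i`. -/
noncomputable def fillComp (e : Bool) (q : I → Δ) (φ : Prop) (cφ : cof φ)
    (f : φ → ∀ i, A (q i)) (a0 : A (q (pt i0 i1 e)))
    (ext : ∀ u : φ, f u (pt i0 i1 e) = a0) (i : I) :
    { a1 : A (q (cn cnx dsj e i (pt i0 i1 (!e)))) //
      ∀ v : φ ∨ i = pt i0 i1 e,
        fillPartial i0 i1 A cnx dsj ax3 ax4 e q φ f a0 ext i v (pt i0 i1 (!e)) = a1 } :=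
  β e (fun j => q (cn cnx dsj e i j)) (φ ∨ i = pt i0 i1 e)
    (ax6 _ _ cφ (cof_pt i0 i1 cof ax5 i e))
    (fillPartial i0 i1 A cnx dsj ax3 ax4 e q φ f a0 ext i)
    (fcast A q (cnL1 i0 i1 cnx dsj ax3 ax4 e i).symm a0)
    (by
      intro v
      rcases v with u | hi
      · rw [fillPartial_left i0 i1 A cnx dsj ax3 ax4 e q φ f a0 ext i (Or.inl u) u]
        exact eq_of_heq ((hcongr_fun (f u) (cnL1 i0 i1 cnx dsj ax3 ax4 e i)).trans
          ((heq_of_eq (ext u)).trans (fcast_heq A q _ a0).symm))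
      · rw [fillPartial_right i0 i1 A cnx dsj ax3 ax4 e q φ f a0 ext i (Or.inr hi) hi])

/-- The filler: a total path extending `f`, `a0` and ending at the composition. -/
noncomputable def fill (e : Bool) (q : I → Δ) (φ : Prop) (cφ : cof φ)
    (f : φ → ∀ i, A (q i)) (a0 : A (q (pt i0 i1 e)))
    (ext : ∀ u : φ, f u (pt i0 i1 e) = a0) (i : I) : A (q i) :=
  fcast A q (cnL2 i0 i1 cnx dsj ax3 ax4 e i)
    (fillComp i0 i1 cof A cnx dsj ax3 ax4 ax5 ax6 β e q φ cφ f a0 ext i).val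

theorem fill_extends (e : Bool) (q : I → Δ) (φ : Prop) (cφ : cof φ)
    (f : φ → ∀ i, A (q i)) (a0 : A (q (pt i0 i1 e)))
    (ext : ∀ u : φ, f u (pt i0 i1 e) = a0) (u : φ) (i : I) :
    f u i = fill i0 i1 cof A cnx dsj ax3 ax4 ax5 ax6 β e q φ cφ f a0 ext i := by
  have hp := (fillComp i0 i1 cof A cnx dsj ax3 ax4 ax5 ax6 β e q φ cφ f a0 ext i).property
    (Or.inl u)
  rw [fillPartial_left i0 i1 A cnx dsj ax3 ax4 e q φ f a0 ext i (Or.inl u) u] at hp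
  exact eq_of_heq ((hcongr_fun (f u) (cnL2 i0 i1 cnx dsj ax3 ax4 e i).symm).trans
    ((heq_of_eq hp).trans (fcast_heq A q _ _).symm))

theorem fill_zero (e : Bool) (q : I → Δ) (φ : Prop) (cφ : cof φ)
    (f : φ → ∀ i, A (q i)) (a0 : A (q (pt i0 i1 e)))
    (ext : ∀ u : φ, f u (pt i0 i1 e) = a0) :
    fill i0 i1 cof A cnx dsj ax3 ax4 ax5 ax6 β e q φ cφ f a0 ext (pt i0 i1 e) = a0 := by
  have hp := (fillComp i0 i1 cof A cnx dsj ax3 ax4 ax5 ax6 β e q φ cφ f a0 ext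
    (pt i0 i1 e)).property (Or.inr rfl)
  rw [fillPartial_right i0 i1 A cnx dsj ax3 ax4 e q φ f a0 ext (pt i0 i1 e)
    (Or.inr rfl) rfl] at hp
  exact eq_of_heq ((fcast_heq A q _ _).trans
    ((heq_of_eq hp.symm).trans (fcast_heq A q _ a0)))

theorem fill_one (ax2 : i0 ≠ i1) (e : Bool) (q : I → Δ) (φ : Prop) (cφ : cof φ)
    (f : φ → ∀ i, A (q i)) (a0 : A (q (pt i0 i1 e)))
    (ext : ∀ u : φ, f u (pt i0 i1 e) = a0) :
    fill i0 i1 cof A cnx dsj ax3 ax4 ax5 ax6 β e q φ cφ f a0 ext (pt i0 i1 (!e)) =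
      (β e q φ cφ f a0 ext).val := by
  have hqp : (fun j => q (cn cnx dsj e (pt i0 i1 (!e)) j)) = q :=
    funext fun j => congrArg q (cnL4 i0 i1 cnx dsj ax3 ax4 e j)
  have hne : pt i0 i1 (!e) ≠ pt i0 i1 e := by
    cases e
    · exact ax2.symm
    · exact ax2
  have hφp : (φ ∨ pt i0 i1 (!e) = pt i0 i1 e) = φ :=
    propext ⟨fun v => v.elim id fun h => absurd h hne, Or.inl⟩
  have hf : HEq (fillPartial i0 i1 A cnx dsj ax3 ax4 e q φ f a0 ext (pt i0 i1 (!e))) f := by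
    refine Function.hfunext hφp ?_
    intro v u _
    rw [fillPartial_left i0 i1 A cnx dsj ax3 ax4 e q φ f a0 ext (pt i0 i1 (!e)) v u]
    refine Function.hfunext rfl ?_
    intro j j' hj
    have hjj : j = j' := eq_of_heq hj
    subst hjj
    exact hcongr_fun (f u) (cnL4 i0 i1 cnx dsj ax3 ax4 e j)
  exact eq_of_heq ((fcast_heq A q _ _).trans
    (comp_congr i0 i1 cof β e hqp hφp _ cφ hf
      (fcast_heq A q (cnL1 i0 i1 cnx dsj ax3 ax4 e (pt i0 i1 (!e))).symm a0) _ ext))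

end Fill

/-! ### The adapted fibration structure -/

section Adapt

variable (i0 i1 : I) (cof : Prop → Prop)
  (cnx dsj : I → I → I)
  (ax3 : ∀ x, cnx i0 x = i0 ∧ cnx x i0 = i0 ∧ cnx i1 x = x ∧ cnx x i1 = x)
  (ax4 : ∀ x, dsj i0 x = x ∧ dsj x i0 = x ∧ dsj i1 x = i1 ∧ dsj x i1 = i1)
  (ax5 : ∀ i : I, cof (i = i0) ∧ cof (i = i1))
  (ax6 : ∀ φ ψ : Prop, cof φ → cof ψ → cof (φ ∨ ψ))
  (ax8 : ∀ φ : I → Prop, (∀ i, cof (φ i)) → cof (∀ i, φ i))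
  {Γ : Type} (Φ : Γ → Prop) (hΦ : ∀ x, cof (Φ x)) (G : Γ → Type)
  (α : isFib i0 i1 cof (fun y : { x : Γ // Φ x } => G y.1))
  (γfib : isFib i0 i1 cof G)

/-- The partial element combining `f` with the `α`-filler. -/
noncomputable def adaptH (e : Bool) (p : I → Γ) (φ : Prop) (cφ : cof φ)
    (f : φ → ∀ i, G (p i)) (a0 : G (p (pt i0 i1 e)))
    (ext : ∀ u : φ, f u (pt i0 i1 e) = a0) :
    (φ ∨ ∀ i, Φ (p i)) → ∀ i, G (p i) :=
  orElim f
    (fun u => fill i0 i1 cof (fun y : { x : Γ // Φ x } => G y.1) cnx dsj ax3 ax4 ax5 ax6 α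
      e (fun i => ⟨p i, u i⟩) φ cφ f a0 ext)
    (fun u' u => funext fun i =>
      fill_extends i0 i1 cof (fun y : { x : Γ // Φ x } => G y.1) cnx dsj ax3 ax4 ax5 ax6 α
        e (fun i => ⟨p i, u i⟩) φ cφ f a0 ext u' i)

theorem adaptH_left (e : Bool) (p : I → Γ) (φ : Prop) (cφ : cof φ)
    (f : φ → ∀ i, G (p i)) (a0 : G (p (pt i0 i1 e)))
    (ext : ∀ u : φ, f u (pt i0 i1 e) = a0) (v : φ ∨ ∀ i, Φ (p i)) (u : φ) :
    adaptH i0 i1 cof cnx dsj ax3 ax4 ax5 ax6 Φ G α e p φ cφ f a0 ext v = f u :=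
  orElim_left _ _ _ _ u

theorem adaptH_right (e : Bool) (p : I → Γ) (φ : Prop) (cφ : cof φ)
    (f : φ → ∀ i, G (p i)) (a0 : G (p (pt i0 i1 e)))
    (ext : ∀ u : φ, f u (pt i0 i1 e) = a0) (v : φ ∨ ∀ i, Φ (p i)) (u : ∀ i, Φ (p i)) :
    adaptH i0 i1 cof cnx dsj ax3 ax4 ax5 ax6 Φ G α e p φ cφ f a0 ext v =
      fill i0 i1 cof (fun y : { x : Γ // Φ x } => G y.1) cnx dsj ax3 ax4 ax5 ax6 α
        e (fun i => ⟨p i, u i⟩) φ cφ f a0 ext :=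
  orElim_right _ _ _ _ u

theorem adaptH_ext (e : Bool) (p : I → Γ) (φ : Prop) (cφ : cof φ)
    (f : φ → ∀ i, G (p i)) (a0 : G (p (pt i0 i1 e)))
    (ext : ∀ u : φ, f u (pt i0 i1 e) = a0) :
    ∀ v : φ ∨ ∀ i, Φ (p i),
      adaptH i0 i1 cof cnx dsj ax3 ax4 ax5 ax6 Φ G α e p φ cφ f a0 ext v (pt i0 i1 e) = a0 := by
  intro v
  rcases v with u | u
  · rw [adaptH_left i0 i1 cof cnx dsj ax3 ax4 ax5 ax6 Φ G α e p φ cφ f a0 ext (Or.inl u) u]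
    exact ext u
  · rw [adaptH_right i0 i1 cof cnx dsj ax3 ax4 ax5 ax6 Φ G α e p φ cφ f a0 ext (Or.inr u) u]
    exact fill_zero i0 i1 cof (fun y : { x : Γ // Φ x } => G y.1) cnx dsj ax3 ax4 ax5 ax6 α
      e (fun i => ⟨p i, u i⟩) φ cφ f a0 ext

/-- The adapted fibration structure on `G`. -/
noncomputable def adaptFib : isFib i0 i1 cof G := fun e p φ cφ f a0 ext =>
  ⟨(γfib e p (φ ∨ ∀ i, Φ (p i)) (ax6 _ _ cφ (ax8 _ fun i => hΦ (p i)))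
      (adaptH i0 i1 cof cnx dsj ax3 ax4 ax5 ax6 Φ G α e p φ cφ f a0 ext) a0
      (adaptH_ext i0 i1 cof cnx dsj ax3 ax4 ax5 ax6 Φ G α e p φ cφ f a0 ext)).val,
    fun u => by
      have h := (γfib e p (φ ∨ ∀ i, Φ (p i)) (ax6 _ _ cφ (ax8 _ fun i => hΦ (p i)))
        (adaptH i0 i1 cof cnx dsj ax3 ax4 ax5 ax6 Φ G α e p φ cφ f a0 ext) a0
        (adaptH_ext i0 i1 cof cnx dsj ax3 ax4 ax5 ax6 Φ G α e p φ cφ f a0 ext)).property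
        (Or.inl u)
      rwa [adaptH_left i0 i1 cof cnx dsj ax3 ax4 ax5 ax6 Φ G α e p φ cφ f a0 ext
        (Or.inl u) u] at h⟩

end Adapt

/-- Adapting composition structures: any fibration structure on `G` can be replaced
by one that restricts along `ι : Γ|Φ ↪ Γ` to a given fibration structure on
`G ∘ ι`. -/
theorem adapt_comp (i0 i1 : I) (cof : Prop → Prop)
    (ax2 : i0 ≠ i1)
    (cnx dsj : I → I → I)
    (ax3 : ∀ x, cnx i0 x = i0 ∧ cnx x i0 = i0 ∧ cnx i1 x = x ∧ cnx x i1 = x)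
    (ax4 : ∀ x, dsj i0 x = x ∧ dsj x i0 = x ∧ dsj i1 x = i1 ∧ dsj x i1 = i1)
    (ax5 : ∀ i : I, cof (i = i0) ∧ cof (i = i1))
    (ax6 : ∀ φ ψ : Prop, cof φ → cof ψ → cof (φ ∨ ψ))
    (ax8 : ∀ φ : I → Prop, (∀ i, cof (φ i)) → cof (∀ i, φ i))
    (Γ : Type) (Φ : Γ → Prop) (hΦ : ∀ x, cof (Φ x))
    (G : Γ → Type)
    (α : isFib i0 i1 cof (fun y : { x : Γ // Φ x } => G y.1))
    (γfib : isFib i0 i1 cof G) :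
    ∃ γ' : isFib i0 i1 cof G,
      reind i0 i1 cof (fun y : { x : Γ // Φ x } => y.1) γ' = α := by
  refine ⟨adaptFib i0 i1 cof cnx dsj ax3 ax4 ax5 ax6 ax8 Φ hΦ G α γfib, ?_⟩
  funext e p φ cφ f a0 ext
  apply Subtype.ext
  have u0 : ∀ i, Φ ((p i).1) := fun i => (p i).2
  have h := (γfib e (fun i => (p i).1) (φ ∨ ∀ i, Φ ((p i).1))
      (ax6 _ _ cφ (ax8 _ fun i => hΦ ((p i).1)))
      (adaptH i0 i1 cof cnx dsj ax3 ax4 ax5 ax6 Φ G α e (fun i => (p i).1) φ cφ f a0 ext) a0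
      (adaptH_ext i0 i1 cof cnx dsj ax3 ax4 ax5 ax6 Φ G α e (fun i => (p i).1)
        φ cφ f a0 ext)).property (Or.inr u0)
  rw [adaptH_right i0 i1 cof cnx dsj ax3 ax4 ax5 ax6 Φ G α e (fun i => (p i).1)
    φ cφ f a0 ext (Or.inr u0) u0] at h
  rw [fill_one i0 i1 cof (fun y : { x : Γ // Φ x } => G y.1) cnx dsj ax3 ax4 ax5 ax6 α
    ax2 e (fun i => ⟨(p i).1, u0 i⟩) φ cφ f a0 ext] at h
  exact h.symm

end CCHM
end

section
/- Given Γ : Type, Φ : Γ → Prop with cof (Φ x) for all x, A : Γ|Φ → Type, B : Γ → Type, f : (x : Γ) → (u : [Φ x]) → A ⟨x, u⟩ → B x, a family of equivalence structures eq : (x : Γ) → (u : [Φ x]) → Equiv (f x u), and fibration structures α : isFib A and β : isFib B, there exists a family G : Γ → Type such that: (i) G x = A ⟨x, u⟩ for every x : Γ and u : [Φ x]; (ii) for every x : Γ there is a bijection G x ≃ Glue Φ A B f x; and (iii) G carries a fibration structure in isFib G. -/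
namespace CCHM

variable {I : Type}

/-- Equivalence structure on a function: all its path-fibres are contractible. -/
def EquivStr (i0 i1 : I) {X Y : Type} (f : X → Y) : Type :=
  (y : Y) → Contr i0 i1 (Σ x : X, PathT i0 i1 Y (f x) y)

/-- The glueing of a cofibrant-partial family `A` onto a total family `B`
along `f`. -/
def GlueFam (Γ : Type) (Φ : Γ → Prop) (A : { x : Γ // Φ x } → Type) (B : Γ → Type)
    (f : (x : Γ) → (u : Φ x) → A ⟨x, u⟩ → B x) : Γ → Type :=
  fun x => Σ a : (u : Φ x) → A ⟨x, u⟩, { b : B x // ∀ u, f x u (a u) = b }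

/-- Propositional (weak) composition. -/
def WComp (i0 i1 : I) (cof : Prop → Prop) (e : Bool) (A : I → Type) : Prop :=
  ∀ (φ : Prop), cof φ → ∀ (f : φ → (i : I) → A i) (a0 : A (pt i0 i1 e)),
    (∀ u : φ, f u (pt i0 i1 e) = a0) →
    ∃ a1 : A (pt i0 i1 (!e)), ∀ u : φ, f u (pt i0 i1 (!e)) = a1

theorem wcomp_of_comp {i0 i1 : I} {cof : Prop → Prop} {e : Bool} {A : I → Type}
    (c : Comp i0 i1 cof e A) : WComp i0 i1 cof e A :=
  fun φ cφ f a0 h => ⟨(c φ cφ f a0 h).1, (c φ cφ f a0 h).2⟩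

/-- Filling in a constant family, using connections. -/
theorem fill_const (i0 i1 : I) (cof : Prop → Prop)
    (cnx dsj : I → I → I)
    (ax3 : ∀ x, cnx i0 x = i0 ∧ cnx x i0 = i0 ∧ cnx i1 x = x ∧ cnx x i1 = x)
    (ax4 : ∀ x, dsj i0 x = x ∧ dsj x i0 = x ∧ dsj i1 x = i1 ∧ dsj x i1 = i1)
    (ax5 : ∀ i : I, cof (i = i0) ∧ cof (i = i1))
    (ax6 : ∀ φ ψ : Prop, cof φ → cof ψ → cof (φ ∨ ψ))
    {X : Type} (w : ∀ e, WComp i0 i1 cof e (fun _ => X)) (e : Bool)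
    (φ : Prop) (cφ : cof φ) (h : φ → I → X) (x0 : X)
    (hx0 : ∀ v : φ, h v (pt i0 i1 e) = x0) :
    ∃ x : I → X, x (pt i0 i1 e) = x0 ∧ ∀ (v : φ) (i : I), h v i = x i := by
  classical
  cases e
  · -- e = false : fill from i0 towards i1
    have base : ∀ i : I, ∀ _w : φ ∨ i = i0,
        (fun j => if v : φ then h v (cnx j i) else x0) (pt i0 i1 false) = x0 := by
      intro i _w
      show (if v : φ then h v (cnx i0 i) else x0) = x0
      by_cases v : φ
      · rw [dif_pos v, (ax3 i).1]; exact hx0 v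
      · rw [dif_neg v]
    choose x hx using fun i : I =>
      w false (φ ∨ i = i0) (ax6 _ _ cφ (ax5 i).1)
        (fun _ j => if v : φ then h v (cnx j i) else x0) x0 (base i)
    refine ⟨x, ?_, ?_⟩
    · have h1 := hx i0 (Or.inr rfl)
      rw [show x (pt i0 i1 false) = x i0 from rfl, ← h1]
      show (if v : φ then h v (cnx i1 i0) else x0) = x0
      by_cases v : φ
      · rw [dif_pos v, (ax3 i0).2.2.1]; exact hx0 v
      · rw [dif_neg v]
    · intro v i
      have h1 := hx i (Or.inl v)
      rw [← h1]
      show h v i = (if v' : φ then h v' (cnx i1 i) else x0)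
      rw [dif_pos v, (ax3 i).2.2.1]
  · -- e = true : fill from i1 towards i0
    have base : ∀ i : I, ∀ _w : φ ∨ i = i1,
        (fun j => if v : φ then h v (dsj j i) else x0) (pt i0 i1 true) = x0 := by
      intro i _w
      show (if v : φ then h v (dsj i1 i) else x0) = x0
      by_cases v : φ
      · rw [dif_pos v, (ax4 i).2.2.1]; exact hx0 v
      · rw [dif_neg v]
    choose x hx using fun i : I =>
      w true (φ ∨ i = i1) (ax6 _ _ cφ (ax5 i).2)
        (fun _ j => if v : φ then h v (dsj j i) else x0) x0 (base i)
    refine ⟨x, ?_, ?_⟩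
    · have h1 := hx i1 (Or.inr rfl)
      rw [show x (pt i0 i1 true) = x i1 from rfl, ← h1]
      show (if v : φ then h v (dsj i0 i1) else x0) = x0
      by_cases v : φ
      · rw [dif_pos v, (ax4 i1).1]; exact hx0 v
      · rw [dif_neg v]
    · intro v i
      have h1 := hx i (Or.inl v)
      rw [← h1]
      show h v i = (if v' : φ then h v' (dsj i0 i) else x0)
      rw [dif_pos v, (ax4 i).1]

/-- Cofibrant partial elements of a contractible composable type extend. -/
theorem extend_contr (i0 i1 : I) (cof : Prop → Prop)
    {X : Type} (w : WComp i0 i1 cof false (fun _ => X)) (ct : Contr i0 i1 X)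
    (φ : Prop) (cφ : cof φ) (part : φ → X) : ∃ x : X, ∀ v : φ, part v = x := by
  obtain ⟨x0, pth⟩ := ct
  obtain ⟨x1, hx1⟩ := w φ cφ (fun v i => (pth (part v)).1 i) x0
    (fun v => (pth (part v)).2.1)
  exact ⟨x1, fun v => ((pth (part v)).2.2).symm.trans (hx1 v)⟩

theorem path_sigma_ext (i0 i1 : I) {X Y : Type} {f : X → Y} {y1 : Y}
    {z w : Σ x : X, PathT i0 i1 Y (f x) y1} (h1 : z.1 = w.1)
    (h2 : z.2.1 = w.2.1) : z = w := by
  obtain ⟨a, q, hq⟩ := z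
  obtain ⟨b, r, hr⟩ := w
  cases h1
  cases h2
  rfl

theorem glue_ext {Γ : Type} {Φ : Γ → Prop} {A : { x : Γ // Φ x } → Type}
    {B : Γ → Type} {f : (x : Γ) → (u : Φ x) → A ⟨x, u⟩ → B x} {x : Γ}
    {z w : GlueFam Γ Φ A B f x} (h1 : z.1 = w.1) (h2 : z.2.1 = w.2.1) : z = w := by
  obtain ⟨a, b, hb⟩ := z
  obtain ⟨a', b', hb'⟩ := w
  cases h1
  cases h2
  rfl


/-- Fibrancy of the path-fibre `Σ x, PathT (fm x) y1` over composable `X`, `Y`. -/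
theorem wcomp_fib (i0 i1 : I) (cof : Prop → Prop) (ax2 : i0 ≠ i1)
    (cnx dsj : I → I → I)
    (ax3 : ∀ x, cnx i0 x = i0 ∧ cnx x i0 = i0 ∧ cnx i1 x = x ∧ cnx x i1 = x)
    (ax4 : ∀ x, dsj i0 x = x ∧ dsj x i0 = x ∧ dsj i1 x = i1 ∧ dsj x i1 = i1)
    (ax5 : ∀ i : I, cof (i = i0) ∧ cof (i = i1))
    (ax6 : ∀ φ ψ : Prop, cof φ → cof ψ → cof (φ ∨ ψ))
    {X Y : Type} (fm : X → Y) (y1 : Y)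
    (wX : ∀ e, WComp i0 i1 cof e (fun _ => X))
    (wY : ∀ e, WComp i0 i1 cof e (fun _ => Y)) :
    ∀ e, WComp i0 i1 cof e (fun _ => (Σ x : X, PathT i0 i1 Y (fm x) y1)) := by
  classical
  intro e φ cφ h z0 hz0
  obtain ⟨ab, habe, hab⟩ := fill_const i0 i1 cof cnx dsj ax3 ax4 ax5 ax6 wX e φ cφ
    (fun v i => (h v i).1) z0.1 (fun v => congrArg Sigma.fst (hz0 v))
  have base : ∀ j : I, ∀ w' : (j = i0 ∨ j = i1) ∨ φ,
      (fun i => if hj0 : j = i0 then fm (ab i) else if hj1 : j = i1 then y1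
        else (h (w'.resolve_left (fun c => c.elim hj0 hj1)) i).2.1 j)
        (pt i0 i1 e) = z0.2.1 j := by
    intro j w'
    by_cases hj0 : j = i0
    · show (if hj0 : j = i0 then fm (ab (pt i0 i1 e)) else _) = z0.2.1 j
      rw [dif_pos hj0, habe, hj0]
      exact z0.2.2.1.symm
    · by_cases hj1 : j = i1
      · show (if _ : j = i0 then _ else if _ : j = i1 then y1 else _) = z0.2.1 j
        rw [dif_neg hj0, dif_pos hj1, hj1]
        exact z0.2.2.2.symm
      · have v : φ := w'.resolve_left (fun c => c.elim hj0 hj1)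
        show (if _ : j = i0 then _ else if _ : j = i1 then y1
            else (h _ (pt i0 i1 e)).2.1 j) = z0.2.1 j
        rw [dif_neg hj0, dif_neg hj1, hz0 _]
  choose q hq using fun j : I =>
    wY e ((j = i0 ∨ j = i1) ∨ φ)
      (ax6 _ _ (ax6 _ _ (ax5 j).1 (ax5 j).2) cφ)
      (fun w' i => if hj0 : j = i0 then fm (ab i) else if hj1 : j = i1 then y1
        else (h (w'.resolve_left (fun c => c.elim hj0 hj1)) i).2.1 j)
      (z0.2.1 j) (base j)
  have hq0 : q i0 = fm (ab (pt i0 i1 (!e))) := by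
    have h1 := hq i0 (Or.inl (Or.inl rfl))
    rw [← h1]
    show (if _ : i0 = i0 then fm (ab (pt i0 i1 (!e))) else _) = _
    rw [dif_pos rfl]
  have hq1 : q i1 = y1 := by
    have h1 := hq i1 (Or.inl (Or.inr rfl))
    rw [← h1]
    show (if _ : i1 = i0 then _ else if _ : i1 = i1 then y1 else _) = y1
    rw [dif_neg (fun hh => ax2 hh.symm), dif_pos rfl]
  refine ⟨⟨ab (pt i0 i1 (!e)), ⟨fun j => q j, hq0, hq1⟩⟩, ?_⟩
  intro v
  refine path_sigma_ext i0 i1 (hab v _) ?_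
  show (h v (pt i0 i1 (!e))).2.1 = fun j => q j
  funext j
  have h1 := hq j (Or.inr v)
  by_cases hj0 : j = i0
  · rw [dif_pos hj0] at h1
    rw [hj0, (h v (pt i0 i1 (!e))).2.2.1, hab v _]
    rw [hj0] at h1
    exact h1
  · by_cases hj1 : j = i1
    · rw [dif_neg hj0, dif_pos hj1] at h1
      rw [hj1, (h v (pt i0 i1 (!e))).2.2.2]
      rw [hj1] at h1
      exact h1
    · rw [dif_neg hj0, dif_neg hj1] at h1
      exact h1


/-- Transfer of weak composition along pointwise isomorphisms. -/
theorem wcomp_transfer (i0 i1 : I) (cof : Prop → Prop) {Γ : Type}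
    {H K : Γ → Type} (iso : ∀ x, H x ≃ K x)
    (w : ∀ (e : Bool) (p : I → Γ), WComp i0 i1 cof e (fun i => H (p i))) :
    ∀ (e : Bool) (p : I → Γ), WComp i0 i1 cof e (fun i => K (p i)) := by
  intro e p φ cφ f a0 h
  obtain ⟨a1, ha1⟩ := w e p φ cφ (fun v i => (iso (p i)).symm (f v i))
    ((iso (p (pt i0 i1 e))).symm a0)
    (fun v => congrArg (iso (p (pt i0 i1 e))).symm (h v))
  refine ⟨iso _ a1, fun v => ?_⟩
  rw [← ha1 v, Equiv.apply_symm_apply]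

/-- Weak composition for the Glue family (no ∀-cofibrancy needed). -/
theorem wcomp_glue (i0 i1 : I) (cof : Prop → Prop) (ax2 : i0 ≠ i1)
    (cnx dsj : I → I → I)
    (ax3 : ∀ x, cnx i0 x = i0 ∧ cnx x i0 = i0 ∧ cnx i1 x = x ∧ cnx x i1 = x)
    (ax4 : ∀ x, dsj i0 x = x ∧ dsj x i0 = x ∧ dsj i1 x = i1 ∧ dsj x i1 = i1)
    (ax5 : ∀ i : I, cof (i = i0) ∧ cof (i = i1))
    (ax6 : ∀ φ ψ : Prop, cof φ → cof ψ → cof (φ ∨ ψ))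
    {Γ : Type} (Φ : Γ → Prop) (hΦ : ∀ x, cof (Φ x))
    (A : { x : Γ // Φ x } → Type) (B : Γ → Type)
    (f : (x : Γ) → (u : Φ x) → A ⟨x, u⟩ → B x)
    (eq : (x : Γ) → (u : Φ x) → EquivStr i0 i1 (f x u))
    (α : isFib i0 i1 cof A) (β : isFib i0 i1 cof B) :
    ∀ (e : Bool) (p : I → Γ), WComp i0 i1 cof e (fun i => GlueFam Γ Φ A B f (p i)) := by
  classical
  intro e p φ cφ g g0 hg0
  -- step 1 : compose the B-components
  obtain ⟨b1, hb1⟩ := β e p φ cφ (fun v i => (g v i).2.1) g0.2.1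
    (fun v => congrArg
      (fun t : GlueFam Γ Φ A B f (p (pt i0 i1 e)) => t.2.1) (hg0 v))
  -- step 2 : over Φ at the target endpoint, extend the partial fibre point
  have step2 : ∀ u : Φ (p (pt i0 i1 (!e))),
      ∃ z : Σ a : A ⟨p (pt i0 i1 (!e)), u⟩,
        PathT i0 i1 (B (p (pt i0 i1 (!e)))) (f (p (pt i0 i1 (!e))) u a) b1,
      ∀ v : φ, (g v (pt i0 i1 (!e))).1 u = z.1 ∧ (fun _ : I => b1) = z.2.1 := by
    intro u
    have wX : ∀ e', WComp i0 i1 cof e' (fun _ => A ⟨p (pt i0 i1 (!e)), u⟩) :=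
      fun e' => wcomp_of_comp (α e' (fun _ => ⟨p (pt i0 i1 (!e)), u⟩))
    have wY : ∀ e', WComp i0 i1 cof e' (fun _ => B (p (pt i0 i1 (!e)))) :=
      fun e' => wcomp_of_comp (β e' (fun _ => p (pt i0 i1 (!e))))
    have wF := wcomp_fib i0 i1 cof ax2 cnx dsj ax3 ax4 ax5 ax6
      (f (p (pt i0 i1 (!e))) u) b1 wX wY
    obtain ⟨z, hz⟩ := extend_contr i0 i1 cof (wF false)
      (eq (p (pt i0 i1 (!e))) u b1) φ cφ
      (fun v => ⟨(g v (pt i0 i1 (!e))).1 u,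
        ⟨fun _ => b1,
          (((g v (pt i0 i1 (!e))).2.2 u).trans (hb1 v)).symm, rfl⟩⟩)
    exact ⟨z, fun v => ⟨congrArg Sigma.fst (hz v),
      congrArg (fun z' : Σ a : A ⟨p (pt i0 i1 (!e)), u⟩,
        PathT i0 i1 (B (p (pt i0 i1 (!e)))) (f (p (pt i0 i1 (!e))) u a) b1 => z'.2.1)
        (hz v)⟩⟩
  choose z hz using step2
  -- step 3 : fix up the B-component
  have base3 : ∀ w' : Φ (p (pt i0 i1 (!e))) ∨ φ,
      (fun i => if hu : Φ (p (pt i0 i1 (!e))) then (z hu).2.1 i else b1)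
        (pt i0 i1 true) = b1 := by
    intro w'
    show (if hu : Φ (p (pt i0 i1 (!e))) then (z hu).2.1 i1 else b1) = b1
    by_cases hu : Φ (p (pt i0 i1 (!e)))
    · rw [dif_pos hu]; exact (z hu).2.2.2
    · rw [dif_neg hu]
  obtain ⟨b1', hb1'⟩ := β true (fun _ => p (pt i0 i1 (!e)))
    (Φ (p (pt i0 i1 (!e))) ∨ φ) (ax6 _ _ (hΦ _) cφ)
    (fun _ i => if hu : Φ (p (pt i0 i1 (!e))) then (z hu).2.1 i else b1) b1 base3
  -- hb1' : ∀ w', (if hu then (z hu).2.1 i0 else b1) = b1'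
  have hfix : ∀ u : Φ (p (pt i0 i1 (!e))), f (p (pt i0 i1 (!e))) u ((z u).1) = b1' := by
    intro u
    have h1 := hb1' (Or.inl u)
    show f (p (pt i0 i1 (!e))) u ((z u).1) = b1'
    rw [← h1]
    show _ = (if hu : Φ (p (pt i0 i1 (!e))) then (z hu).2.1 i0 else b1)
    rw [dif_pos u, (z u).2.2.1]
  refine ⟨⟨fun u => (z u).1, ⟨b1', hfix⟩⟩, ?_⟩
  intro v
  refine glue_ext ?_ ?_
  · funext u
    exact (hz u v).1
  · show (g v (pt i0 i1 (!e))).2.1 = b1'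
    have h1 := hb1' (Or.inr v)
    by_cases hu : Φ (p (pt i0 i1 (!e)))
    · rw [dif_pos hu] at h1
      have h2 := congrFun (hz hu v).2 i0
      rw [hb1 v, h2]
      exact h1
    · rw [dif_neg hu] at h1
      rw [hb1 v]
      exact h1


/-- When `Φ x` holds, `A ⟨x,u⟩` is isomorphic to the glueing (strictly, using
definitional proof irrelevance). -/
def glueEquiv {Γ : Type} (Φ : Γ → Prop) (A : { x : Γ // Φ x } → Type)
    (B : Γ → Type) (f : (x : Γ) → (u : Φ x) → A ⟨x, u⟩ → B x)
    (x : Γ) (u : Φ x) : A ⟨x, u⟩ ≃ GlueFam Γ Φ A B f x where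
  toFun a := ⟨fun _ => a, ⟨f x u a, fun _ => rfl⟩⟩
  invFun g := g.1 u
  left_inv a := rfl
  right_inv g := glue_ext rfl (g.2.2 u)

/-- Strict glueing: there is a family `G` strictly extending the partial family
`A`, isomorphic to the glueing `Glue Φ A B f`, and carrying a fibration
structure. -/
theorem strict_glue (i0 i1 : I) (cof : Prop → Prop)
    (ax2 : i0 ≠ i1)
    (cnx dsj : I → I → I)
    (ax3 : ∀ x, cnx i0 x = i0 ∧ cnx x i0 = i0 ∧ cnx i1 x = x ∧ cnx x i1 = x)
    (ax4 : ∀ x, dsj i0 x = x ∧ dsj x i0 = x ∧ dsj i1 x = i1 ∧ dsj x i1 = i1)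
    (ax5 : ∀ i : I, cof (i = i0) ∧ cof (i = i1))
    (ax6 : ∀ φ ψ : Prop, cof φ → cof ψ → cof (φ ∨ ψ))
    (ax9 : ∀ (φ : Prop), cof φ → ∀ (A : φ → Type) (B : Type)
      (s : (u : φ) → A u ≃ B),
      ∃ (B' : Type) (s' : B' ≃ B), ∀ u : φ, ∃ _h : A u = B', HEq (s u) s')
    (Γ : Type) (Φ : Γ → Prop) (hΦ : ∀ x, cof (Φ x))
    (A : { x : Γ // Φ x } → Type) (B : Γ → Type)
    (f : (x : Γ) → (u : Φ x) → A ⟨x, u⟩ → B x)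
    (eq : (x : Γ) → (u : Φ x) → EquivStr i0 i1 (f x u))
    (α : isFib i0 i1 cof A) (β : isFib i0 i1 cof B) :
    ∃ G : Γ → Type,
      (∀ (x : Γ) (u : Φ x), G x = A ⟨x, u⟩) ∧
      (∀ x : Γ, Nonempty (G x ≃ GlueFam Γ Φ A B f x)) ∧
      Nonempty (isFib i0 i1 cof G) := by
  classical
  choose G iso hGA using fun x : Γ =>
    ax9 (Φ x) (hΦ x) (fun u => A ⟨x, u⟩) (GlueFam Γ Φ A B f x)
      (glueEquiv Φ A B f x)
  refine ⟨G, ?_, ?_, ?_⟩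
  · intro x u
    obtain ⟨h, -⟩ := hGA x u
    exact h.symm
  · intro x
    exact ⟨iso x⟩
  · have wGlue := wcomp_glue i0 i1 cof ax2 cnx dsj ax3 ax4 ax5 ax6 Φ hΦ A B f eq α β
    have wG := wcomp_transfer i0 i1 cof (fun x => (iso x).symm) wGlue
    exact ⟨fun e p φ cφ f' a0 h =>
      ⟨(wG e p φ cφ f' a0 h).choose, (wG e p φ cφ f' a0 h).choose_spec⟩⟩


end CCHM
end

section
/- For every Γ : Type and every family P : Γ × I → Type with fibration structure ρ : isFib P, define f : (x : Γ) → P (x, i0) → P (x, i1) by f x a := ρ i0 (fun i => (x, i)) False elim a (composition along the path i ↦ (x, i) from the empty cofibrant partial path, where cof False follows from (ax2) and (ax5)). Then there is an equivalence structure (x : Γ) → Equiv (f x). -/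
namespace CCHM

variable {I : Type}

-- auxiliary development, to be inserted before the theorem

section Aux

/-- Classical dite. -/
noncomputable def dA {α : Sort*} (φ : Prop) (t : φ → α) (e : ¬φ → α) : α :=
  @dite _ φ (Classical.propDecidable φ) t e

theorem dA_pos {α : Sort*} {φ : Prop} (h : φ) (t : φ → α) (e : ¬φ → α) :
    dA φ t e = t h := dif_pos h

theorem dA_neg {α : Sort*} {φ : Prop} (h : ¬φ) (t : φ → α) (e : ¬φ → α) :
    dA φ t e = e h := dif_neg h

/-- transport in a family over `I`. -/
def tr {B : I → Type} {i j : I} (h : i = j) (a : B i) : B j := h ▸ a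

theorem tr_heq {B : I → Type} {i j : I} (h : i = j) (a : B i) :
    HEq (tr h a) a := by subst h; rfl

theorem heq_apply {B : I → Type} (g : (i : I) → B i) {i j : I} (h : i = j) :
    HEq (g i) (g j) := by subst h; rfl

theorem tr_eq_of_heq {B : I → Type} {i j : I} (h : i = j) {a : B i} {b : B j}
    (hh : HEq a b) : tr h a = b := by subst h; exact eq_of_heq hh

theorem eq_tr_of_heq {B : I → Type} {i j : I} (h : i = j) {a : B i} {b : B j}
    (hh : HEq b a) : b = tr h a := by subst h; exact eq_of_heq hh

theorem tr_eq_tr {B : I → Type} {i j k : I} (h : i = k) (h' : j = k)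
    {a : B i} {b : B j} (hh : HEq a b) : tr h a = tr h' b := by
  subst h; subst h'; exact eq_of_heq hh

end Aux

/-- A bundled context for the construction. -/
structure Ctx (I : Type) where
  i0 : I
  i1 : I
  cof : Prop → Prop
  ax2 : i0 ≠ i1
  cnx : I → I → I
  dsj : I → I → I
  ax3 : ∀ x, cnx i0 x = i0 ∧ cnx x i0 = i0 ∧ cnx i1 x = x ∧ cnx x i1 = x
  ax4 : ∀ x, dsj i0 x = x ∧ dsj x i0 = x ∧ dsj i1 x = i1 ∧ dsj x i1 = i1
  ax5 : ∀ i, cof (i = i0) ∧ cof (i = i1)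
  ax6 : ∀ φ ψ : Prop, cof φ → cof ψ → cof (φ ∨ ψ)
  B : I → Type
  σ : isFib i0 i1 cof B
  hF : cof False

namespace Ctx

variable {I : Type} (c : Ctx I)

/-- endpoint -/
abbrev ee (e : Bool) : I := pt c.i0 c.i1 e

/-- connection; `cn e j` is a path from `j`-end perspective. -/
def cn (e : Bool) (j i : I) : I := bif e then c.dsj j i else c.cnx j i

theorem cne1 (e : Bool) (j : I) : c.cn e j (c.ee e) = c.ee e := by
  cases e
  · exact (c.ax3 j).2.1
  · exact (c.ax4 j).2.2.2

theorem cne2 (e : Bool) (j : I) : c.cn e j (c.ee (!e)) = j := by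
  cases e
  · exact (c.ax3 j).2.2.2
  · exact (c.ax4 j).2.1

theorem cne3 (e : Bool) (i : I) : c.cn e (c.ee (!e)) i = i := by
  cases e
  · exact (c.ax3 i).2.2.1
  · exact (c.ax4 i).1

theorem cne4 (e : Bool) (i : I) : c.cn e (c.ee e) i = c.ee e := by
  cases e
  · exact (c.ax3 i).1
  · exact (c.ax4 i).2.2.1

theorem ee_ne (e : Bool) : c.ee (!e) ≠ c.ee e := by
  cases e
  · exact fun h => c.ax2 h.symm
  · exact c.ax2

theorem cofee (j : I) (e : Bool) : c.cof (j = c.ee e) := by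
  cases e
  · exact (c.ax5 j).1
  · exact (c.ax5 j).2

/-- congruence for compositions -/
theorem comp_congr (e : Bool) {q q' : I → I} (hq : ∀ i, q i = q' i)
    {φ φ' : Prop} (hp : φ ↔ φ') (hφ : c.cof φ) (hφ' : c.cof φ')
    {f : φ → (i : I) → c.B (q i)} {f' : φ' → (i : I) → c.B (q' i)}
    (hf : ∀ (u : φ) (u' : φ') (i : I), HEq (f u i) (f' u' i))
    {a0 : c.B (q (c.ee e))} {a0' : c.B (q' (c.ee e))} (ha : HEq a0 a0')
    {h : ∀ u, f u (c.ee e) = a0} {h' : ∀ u, f' u (c.ee e) = a0'} :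
    HEq (c.σ e q φ hφ f a0 h).1 (c.σ e q' φ' hφ' f' a0' h').1 := by
  have hq' : q = q' := funext hq
  subst hq'
  have hp' : φ = φ' := propext hp
  subst hp'
  have hf' : f = f' := funext fun u => funext fun i => eq_of_heq (hf u u i)
  subst hf'
  have ha' : a0 = a0' := eq_of_heq ha
  subst ha'
  rfl

/-- the raw composition underlying the filling at `j` -/
noncomputable def fillAux (e : Bool) (q : I → I) (φ : Prop) (hφ : c.cof φ)
    (f : φ → (i : I) → c.B (q i)) (a0 : c.B (q (c.ee e)))
    (h : ∀ u, f u (c.ee e) = a0) (j : I) :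
    { a1 : c.B (q (c.cn e j (c.ee (!e)))) //
      ∀ u : (φ ∨ j = c.ee e),
        (fun (u : φ ∨ j = c.ee e) (i : I) =>
          dA φ (fun v => f v (c.cn e j i))
            (fun v => tr (B := fun t => c.B (q t))
              (show c.ee e = c.cn e j i by
                rw [u.resolve_left v]; exact (c.cne4 e i).symm) a0)) u (c.ee (!e)) = a1 } :=
  c.σ e (fun i => q (c.cn e j i)) (φ ∨ j = c.ee e)
    (c.ax6 _ _ hφ (c.cofee j e))
    (fun u i =>
      dA φ (fun v => f v (c.cn e j i))
        (fun v => tr (B := fun t => c.B (q t))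
          (show c.ee e = c.cn e j i by
            rw [u.resolve_left v]; exact (c.cne4 e i).symm) a0))
    (tr (B := fun t => c.B (q t)) (c.cne1 e j).symm a0)
    (by
      intro u
      by_cases v : φ
      · simp only [dA_pos v]
        exact eq_tr_of_heq (B := fun t => c.B (q t)) (c.cne1 e j).symm
          (HEq.trans (heq_apply (B := fun t => c.B (q t)) (f v) (c.cne1 e j)) (heq_of_eq (h v)))
      · simp only [dA_neg v])

/-- filling -/
noncomputable def fill (e : Bool) (q : I → I) (φ : Prop) (hφ : c.cof φ)
    (f : φ → (i : I) → c.B (q i)) (a0 : c.B (q (c.ee e)))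
    (h : ∀ u, f u (c.ee e) = a0) (j : I) : c.B (q j) :=
  tr (B := fun t => c.B (q t)) (c.cne2 e j) (c.fillAux e q φ hφ f a0 h j).1

theorem fill_edge (e : Bool) (q : I → I) (φ : Prop) (hφ : c.cof φ)
    (f : φ → (i : I) → c.B (q i)) (a0 : c.B (q (c.ee e)))
    (h : ∀ u, f u (c.ee e) = a0) :
    c.fill e q φ hφ f a0 h (c.ee e) = a0 := by
  have h2 := (c.fillAux e q φ hφ f a0 h (c.ee e)).2 (Or.inr rfl)
  simp only [fill]
  rw [← h2]
  by_cases v : φ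
  · simp only [dA_pos v]
    exact tr_eq_of_heq (B := fun t => c.B (q t)) (c.cne2 e (c.ee e))
      (HEq.trans (heq_apply (B := fun t => c.B (q t)) (f v) (c.cne2 e (c.ee e))) (heq_of_eq (h v)))
  · simp only [dA_neg v]
    exact tr_eq_of_heq (B := fun t => c.B (q t)) (c.cne2 e (c.ee e))
      (tr_heq (B := fun t => c.B (q t)) _ a0)

theorem fill_ext (e : Bool) (q : I → I) (φ : Prop) (hφ : c.cof φ)
    (f : φ → (i : I) → c.B (q i)) (a0 : c.B (q (c.ee e)))
    (h : ∀ u, f u (c.ee e) = a0) (v : φ) (j : I) :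
    f v j = c.fill e q φ hφ f a0 h j := by
  have h2 := (c.fillAux e q φ hφ f a0 h j).2 (Or.inl v)
  simp only [fill]
  rw [← h2]
  simp only [dA_pos v]
  exact (tr_eq_of_heq (B := fun t => c.B (q t)) (c.cne2 e j)
    (heq_apply (B := fun t => c.B (q t)) (f v) (c.cne2 e j))).symm

theorem fill_cap (e : Bool) (q : I → I) (φ : Prop) (hφ : c.cof φ)
    (f : φ → (i : I) → c.B (q i)) (a0 : c.B (q (c.ee e)))
    (h : ∀ u, f u (c.ee e) = a0) :
    c.fill e q φ hφ f a0 h (c.ee (!e)) = (c.σ e q φ hφ f a0 h).1 := by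
  simp only [fill, fillAux]
  refine tr_eq_of_heq (B := fun t => c.B (q t)) (c.cne2 e (c.ee (!e)))
    (c.comp_congr e (fun i => congrArg q (c.cne3 e i))
    ⟨fun o => o.resolve_right (c.ee_ne e), Or.inl⟩ _ _ ?_ ?_)
  · intro u u' i
    simp only [dA_pos u']
    exact heq_apply (B := fun t => c.B (q t)) (f u') (c.cne3 e i)
  · exact tr_heq (B := fun t => c.B (q t)) _ a0

end Ctx

namespace Ctx

variable {I : Type} (c : Ctx I)

/-- the transport function `B i0 → B i1` -/
noncomputable def F (a : c.B c.i0) : c.B c.i1 :=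
  (c.σ false (fun i => i) False c.hF (fun u => u.elim) a (fun u => u.elim)).1

/-- the filling of the empty transport: a path over `B` from `a` to `F a`. -/
noncomputable def plus (a : c.B c.i0) : (j : I) → c.B j :=
  c.fill false (fun i => i) False c.hF (fun u => u.elim) a (fun u => u.elim)

theorem plus_zero (a : c.B c.i0) : c.plus a c.i0 = a :=
  c.fill_edge false (fun i => i) False c.hF (fun u => u.elim) a (fun u => u.elim)

theorem plus_one (a : c.B c.i0) : c.plus a c.i1 = c.F a :=
  c.fill_cap false (fun i => i) False c.hF (fun u => u.elim) a (fun u => u.elim)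

/-- the fibre of `F` at `y`. -/
noncomputable def Fib (y : c.B c.i1) : Type :=
  Σ a : c.B c.i0, PathT c.i0 c.i1 (c.B c.i1) (c.F a) y

theorem fib_ext {y : c.B c.i1} {a a' : c.B c.i0} (ha : a = a')
    {p : PathT c.i0 c.i1 (c.B c.i1) (c.F a) y}
    {p' : PathT c.i0 c.i1 (c.B c.i1) (c.F a') y}
    (hp : p.1 = p'.1) :
    (⟨a, p⟩ : c.Fib y) = ⟨a', p'⟩ := by
  subst ha
  rw [Subtype.ext hp]

/-- square: from a fibre element `(aa, pp)` over `y`, a square `sq j k : B (dsj j k)`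
whose `k = i1` face is `pp j`, whose `j = i0` face is `plus aa` and whose
`j = i1` face is constantly `y`. -/
noncomputable def sq (y : c.B c.i1) (aa : c.B c.i0) (pp : I → c.B c.i1)
    (hp0 : pp c.i0 = c.F aa) (hp1 : pp c.i1 = y) (j : I) :
    (k : I) → c.B (c.dsj j k) :=
  c.fill true (fun i => c.dsj j i) (j = c.i0 ∨ j = c.i1)
    (c.ax6 _ _ (c.ax5 j).1 (c.ax5 j).2)
    (fun v i =>
      dA (j = c.i0)
        (fun h0 => tr (B := c.B)
          (show i = c.dsj j i by rw [h0]; exact ((c.ax4 i).1).symm) (c.plus aa i))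
        (fun h0 => tr (B := c.B)
          (show c.i1 = c.dsj j i by
            rw [v.resolve_left h0]; exact ((c.ax4 i).2.2.1).symm) y))
    (tr (B := c.B) (show c.i1 = c.dsj j c.i1 from ((c.ax4 j).2.2.2).symm) (pp j))
    (by
      intro v
      by_cases h0 : j = c.i0
      · simp only [dA_pos h0]
        exact tr_eq_tr _ _
          (heq_of_eq (show c.plus aa c.i1 = pp j by rw [c.plus_one, h0, hp0]))
      · simp only [dA_neg h0]
        exact tr_eq_tr _ _
          (heq_of_eq (show y = pp j by rw [v.resolve_left h0, hp1])))

theorem sq_one (y : c.B c.i1) (aa : c.B c.i0) (pp : I → c.B c.i1)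
    (hp0 : pp c.i0 = c.F aa) (hp1 : pp c.i1 = y) (j : I) :
    c.sq y aa pp hp0 hp1 j c.i1
      = tr (B := c.B) ((c.ax4 j).2.2.2).symm (pp j) :=
  c.fill_edge true _ _ _ _ _ _

theorem sq_ext (y : c.B c.i1) (aa : c.B c.i0) (pp : I → c.B c.i1)
    (hp0 : pp c.i0 = c.F aa) (hp1 : pp c.i1 = y) (j : I)
    (v : j = c.i0 ∨ j = c.i1) (k : I) :
    dA (j = c.i0)
      (fun h0 => tr (B := c.B)
        (show k = c.dsj j k by rw [h0]; exact ((c.ax4 k).1).symm) (c.plus aa k))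
      (fun h0 => tr (B := c.B)
        (show c.i1 = c.dsj j k by
          rw [v.resolve_left h0]; exact ((c.ax4 k).2.2.1).symm) y)
      = c.sq y aa pp hp0 hp1 j k :=
  c.fill_ext true (fun i => c.dsj j i) (j = c.i0 ∨ j = c.i1)
    (c.ax6 _ _ (c.ax5 j).1 (c.ax5 j).2)
    (fun v i =>
      dA (j = c.i0)
        (fun h0 => tr (B := c.B)
          (show i = c.dsj j i by rw [h0]; exact ((c.ax4 i).1).symm) (c.plus aa i))
        (fun h0 => tr (B := c.B)
          (show c.i1 = c.dsj j i by
            rw [v.resolve_left h0]; exact ((c.ax4 i).2.2.1).symm) y))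
    (tr (B := c.B) (show c.i1 = c.dsj j c.i1 from ((c.ax4 j).2.2.2).symm) (pp j))
    (by
      intro v
      by_cases h0 : j = c.i0
      · simp only [dA_pos h0]
        exact tr_eq_tr _ _
          (heq_of_eq (show c.plus aa c.i1 = pp j by rw [c.plus_one, h0, hp0]))
      · simp only [dA_neg h0]
        exact tr_eq_tr _ _
          (heq_of_eq (show y = pp j by rw [v.resolve_left h0, hp1])))
    v k

/-- the path over `B` from `aa` to `y` obtained from the square. -/
noncomputable def w (y : c.B c.i1) (aa : c.B c.i0) (pp : I → c.B c.i1)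
    (hp0 : pp c.i0 = c.F aa) (hp1 : pp c.i1 = y) (j : I) : c.B j :=
  tr (B := c.B) ((c.ax4 j).2.1) (c.sq y aa pp hp0 hp1 j c.i0)

theorem w_zero (y : c.B c.i1) (aa : c.B c.i0) (pp : I → c.B c.i1)
    (hp0 : pp c.i0 = c.F aa) (hp1 : pp c.i1 = y) :
    c.w y aa pp hp0 hp1 c.i0 = aa := by
  have h2 := c.sq_ext y aa pp hp0 hp1 c.i0 (Or.inl rfl) c.i0
  simp only [w]
  rw [← h2]
  simp only [dA_pos rfl]
  exact tr_eq_of_heq (B := c.B) ((c.ax4 c.i0).2.1)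
    (HEq.trans (tr_heq (B := c.B) _ _) (heq_of_eq (c.plus_zero aa)))

theorem w_one (y : c.B c.i1) (aa : c.B c.i0) (pp : I → c.B c.i1)
    (hp0 : pp c.i0 = c.F aa) (hp1 : pp c.i1 = y) :
    c.w y aa pp hp0 hp1 c.i1 = y := by
  have h2 := c.sq_ext y aa pp hp0 hp1 c.i1 (Or.inr rfl) c.i0
  simp only [w]
  rw [← h2]
  simp only [dA_neg (show ¬(c.i1 = c.i0) from fun h => c.ax2 h.symm)]
  exact tr_eq_of_heq (B := c.B) ((c.ax4 c.i1).2.1)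
    (tr_heq (B := c.B) _ y)

/-- given a cofibrant partial fibre element, the "total path over B": -/
noncomputable def vv (y : c.B c.i1) (φ : Prop) (hφ : c.cof φ)
    (g : φ → c.Fib y) : (j : I) → c.B j :=
  c.fill true (fun i => i) φ hφ
    (fun u => c.w y (g u).1 (g u).2.1 (g u).2.2.1 (g u).2.2.2) y
    (fun u => c.w_one y (g u).1 (g u).2.1 (g u).2.2.1 (g u).2.2.2)

theorem vv_one (y : c.B c.i1) (φ : Prop) (hφ : c.cof φ) (g : φ → c.Fib y) :
    c.vv y φ hφ g c.i1 = y :=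
  c.fill_edge true _ _ _ _ _ _

theorem vv_ext (y : c.B c.i1) (φ : Prop) (hφ : c.cof φ) (g : φ → c.Fib y)
    (u : φ) (j : I) :
    c.w y (g u).1 (g u).2.1 (g u).2.2.1 (g u).2.2.2 j = c.vv y φ hφ g j :=
  c.fill_ext true (fun i => i) φ hφ
    (fun u => c.w y (g u).1 (g u).2.1 (g u).2.2.1 (g u).2.2.2) y
    (fun u => c.w_one y (g u).1 (g u).2.1 (g u).2.2.1 (g u).2.2.2) u j

end Ctx

namespace Ctx

variable {I : Type} (c : Ctx I)

/-- the composite square giving the path component of the total fibre element -/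
noncomputable def piAux (y : c.B c.i1) (φ : Prop) (hφ : c.cof φ)
    (g : φ → c.Fib y) (j : I) :=
  c.σ false (fun i => c.dsj j i) (φ ∨ (j = c.i0 ∨ j = c.i1))
    (c.ax6 _ _ hφ (c.ax6 _ _ (c.ax5 j).1 (c.ax5 j).2))
    (fun u i =>
      dA φ
        (fun hu => c.sq y (g hu).1 (g hu).2.1 (g hu).2.2.1 (g hu).2.2.2 j i)
        (fun hu =>
          dA (j = c.i0)
            (fun h0 => tr (B := c.B)
              (show i = c.dsj j i by rw [h0]; exact ((c.ax4 i).1).symm)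
              (c.plus (c.vv y φ hφ g c.i0) i))
            (fun h0 => tr (B := c.B)
              (show c.i1 = c.dsj j i by
                rw [(u.resolve_left hu).resolve_left h0]
                exact ((c.ax4 i).2.2.1).symm) y)))
    (tr (B := c.B) (show j = c.dsj j c.i0 from ((c.ax4 j).2.1).symm)
      (c.vv y φ hφ g j))
    (by
      intro u
      by_cases hu : φ
      · simp only [dA_pos hu]
        have h3 := c.vv_ext y φ hφ g hu j
        rw [← h3]
        simp only [w]
        exact eq_tr_of_heq (B := c.B) ((c.ax4 j).2.1).symm
          ((tr_heq (B := c.B) _ _).symm)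
      · simp only [dA_neg hu]
        by_cases h0 : j = c.i0
        · simp only [dA_pos h0]
          exact tr_eq_tr _ _
            (HEq.trans (heq_of_eq (c.plus_zero _))
              (heq_apply (c.vv y φ hφ g) h0.symm))
        · simp only [dA_neg h0]
          exact tr_eq_tr _ _
            (HEq.trans (heq_of_eq (c.vv_one y φ hφ g).symm)
              (heq_apply (c.vv y φ hφ g)
                ((u.resolve_left hu).resolve_left h0).symm)))

/-- the path component of the total fibre element -/
noncomputable def pi (y : c.B c.i1) (φ : Prop) (hφ : c.cof φ)
    (g : φ → c.Fib y) (j : I) : c.B c.i1 :=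
  tr (B := c.B) ((c.ax4 j).2.2.2) (c.piAux y φ hφ g j).1

theorem pi_ext (y : c.B c.i1) (φ : Prop) (hφ : c.cof φ)
    (g : φ → c.Fib y) (u : φ) (j : I) :
    (g u).2.1 j = c.pi y φ hφ g j := by
  have h2 := (c.piAux y φ hφ g j).2 (Or.inl u)
  simp only [dA_pos u] at h2
  have h2' : c.sq y (g u).1 (g u).2.1 (g u).2.2.1 (g u).2.2.2 j c.i1
      = (c.piAux y φ hφ g j).1 := h2
  rw [c.sq_one] at h2'
  simp only [pi]
  rw [← h2']
  exact eq_tr_of_heq (B := c.B) ((c.ax4 j).2.2.2)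
    ((tr_heq (B := c.B) _ _).symm)

theorem pi_zero (y : c.B c.i1) (φ : Prop) (hφ : c.cof φ)
    (g : φ → c.Fib y) :
    c.pi y φ hφ g c.i0 = c.F (c.vv y φ hφ g c.i0) := by
  have h2 := (c.piAux y φ hφ g c.i0).2 (Or.inr (Or.inl rfl))
  simp only [pi]
  by_cases hu : φ
  · simp only [dA_pos hu] at h2
    have h2' : c.sq y (g hu).1 (g hu).2.1 (g hu).2.2.1 (g hu).2.2.2 c.i0 c.i1
        = (c.piAux y φ hφ g c.i0).1 := h2
    rw [c.sq_one] at h2'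
    rw [← h2']
    have ha : (g hu).1 = c.vv y φ hφ g c.i0 :=
      (c.w_zero y (g hu).1 (g hu).2.1 (g hu).2.2.1 (g hu).2.2.2).symm.trans
        (c.vv_ext y φ hφ g hu c.i0)
    exact tr_eq_of_heq (B := c.B) ((c.ax4 c.i0).2.2.2)
      (HEq.trans (tr_heq (B := c.B) _ _)
        (heq_of_eq ((g hu).2.2.1.trans (congrArg c.F ha))))
  · simp only [dA_neg hu, dA_pos rfl] at h2
    rw [← h2]
    exact tr_eq_of_heq (B := c.B) ((c.ax4 c.i0).2.2.2)
      (HEq.trans (tr_heq (B := c.B) _ _) (heq_of_eq (c.plus_one _)))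

theorem pi_one (y : c.B c.i1) (φ : Prop) (hφ : c.cof φ)
    (g : φ → c.Fib y) :
    c.pi y φ hφ g c.i1 = y := by
  have h2 := (c.piAux y φ hφ g c.i1).2 (Or.inr (Or.inr rfl))
  simp only [pi]
  by_cases hu : φ
  · simp only [dA_pos hu] at h2
    have h2' : c.sq y (g hu).1 (g hu).2.1 (g hu).2.2.1 (g hu).2.2.2 c.i1 c.i1
        = (c.piAux y φ hφ g c.i1).1 := h2
    rw [c.sq_one] at h2'
    rw [← h2']
    exact tr_eq_of_heq (B := c.B) ((c.ax4 c.i1).2.2.2)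
      (HEq.trans (tr_heq (B := c.B) _ _) (heq_of_eq (g hu).2.2.2))
  · simp only [dA_neg hu,
      dA_neg (show ¬(c.i1 = c.i0) from fun h => c.ax2 h.symm)] at h2
    rw [← h2]
    exact tr_eq_of_heq (B := c.B) ((c.ax4 c.i1).2.2.2)
      (tr_heq (B := c.B) _ y)

/-- extension operator on the fibre of `F` at `y`. -/
noncomputable def extFib (y : c.B c.i1) (φ : Prop) (hφ : c.cof φ)
    (g : φ → c.Fib y) : { z : c.Fib y // ∀ u, g u = z } :=
  ⟨⟨c.vv y φ hφ g c.i0,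
      ⟨fun j => c.pi y φ hφ g j, c.pi_zero y φ hφ g, c.pi_one y φ hφ g⟩⟩,
    fun u =>
      c.fib_ext
        ((c.w_zero y (g u).1 (g u).2.1 (g u).2.2.1 (g u).2.2.2).symm.trans
          (c.vv_ext y φ hφ g u c.i0))
        (funext fun j => c.pi_ext y φ hφ g u j)⟩

/-- the fibre of `F` at `y` is contractible. -/
noncomputable def contrFib (y : c.B c.i1) : Contr c.i0 c.i1 (c.Fib y) :=
  ⟨(c.extFib y False c.hF (fun u => u.elim)).1, fun z =>
    ⟨fun s => (c.extFib y (s = c.i0 ∨ s = c.i1)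
        (c.ax6 _ _ (c.ax5 s).1 (c.ax5 s).2)
        (fun _ => dA (s = c.i0)
          (fun _ => (c.extFib y False c.hF (fun u => u.elim)).1)
          (fun _ => z))).1,
      by
        constructor
        · have h2 := (c.extFib y (c.i0 = c.i0 ∨ c.i0 = c.i1)
            (c.ax6 _ _ (c.ax5 c.i0).1 (c.ax5 c.i0).2)
            (fun _ => dA (c.i0 = c.i0)
              (fun _ => (c.extFib y False c.hF (fun u => u.elim)).1)
              (fun _ => z))).2 (Or.inl rfl)
          simp only [dA_pos rfl] at h2
          exact h2.symm
        · have h2 := (c.extFib y (c.i1 = c.i0 ∨ c.i1 = c.i1)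
            (c.ax6 _ _ (c.ax5 c.i1).1 (c.ax5 c.i1).2)
            (fun _ => dA (c.i1 = c.i0)
              (fun _ => (c.extFib y False c.hF (fun u => u.elim)).1)
              (fun _ => z))).2 (Or.inr rfl)
          simp only [dA_neg (show ¬(c.i1 = c.i0) from fun h => c.ax2 h.symm)] at h2
          exact h2.symm⟩⟩

/-- `F` is an equivalence. -/
noncomputable def equivC : EquivStr c.i0 c.i1 c.F :=
  fun y => c.contrFib y

end Ctx

/-- Converting paths between fibrations to equivalences: for a fibration
`P` over `Γ × I`, composition from `i0` to `i1` along the paths `i ↦ (x, i)`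
(from the empty cofibrant partial path) is an equivalence. -/
theorem path_to_equiv (i0 i1 : I) (cof : Prop → Prop)
    (ax2 : i0 ≠ i1)
    (cnx dsj : I → I → I)
    (ax3 : ∀ x, cnx i0 x = i0 ∧ cnx x i0 = i0 ∧ cnx i1 x = x ∧ cnx x i1 = x)
    (ax4 : ∀ x, dsj i0 x = x ∧ dsj x i0 = x ∧ dsj i1 x = i1 ∧ dsj x i1 = i1)
    (ax5 : ∀ i : I, cof (i = i0) ∧ cof (i = i1))
    (ax6 : ∀ φ ψ : Prop, cof φ → cof ψ → cof (φ ∨ ψ))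
    (Γ : Type) (P : Γ × I → Type) (ρ : isFib i0 i1 cof P)
    (hF : cof False) :
    Nonempty ((x : Γ) →
      EquivStr i0 i1 (fun a : P (x, i0) =>
        (ρ false (fun i => (x, i)) False hF (fun u => u.elim) a
          (fun u => u.elim)).1)) := by
  exact ⟨fun x => Ctx.equivC
    { i0 := i0, i1 := i1, cof := cof, ax2 := ax2, cnx := cnx, dsj := dsj,
      ax3 := ax3, ax4 := ax4, ax5 := ax5, ax6 := ax6,
      B := fun j => P (x, j), σ := fun e p => ρ e (fun i => (x, p i)),
      hF := hF }⟩

end CCHM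
end

section
/- Let C be a small category such that the colimit functor colim : (Cᵒᵖ ⥤ Type) ⥤ Type (left adjoint to the constant-presheaf functor) preserves finite products (i.e. C is cosifted). Then for every pair of objects c, i of C, the map Bool → ((yoneda.obj c ⨯ yoneda.obj i) ⟶ (Functor.const Cᵒᵖ).obj Bool) sending b : Bool to the natural transformation that is constantly b is a bijection; in other words, there are exactly two morphisms from the presheaf y(c) ⨯ y(i) to the constant presheaf at Bool, so every decidable subobject of y(c) ⨯ y(i) is either the smallest or the largest subobject (the representable presheaf y(i) is internally connected). -/
open CategoryTheory CategoryTheory.Limits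

lemma colim_yoneda_subsingleton {C : Type} [SmallCategory C] (c : C) :
    Subsingleton (colimit (yoneda.obj c)) := by
  constructor
  intro x y
  obtain ⟨X, f, rfl⟩ := Types.jointly_surjective' x
  obtain ⟨Y, g, rfl⟩ := Types.jointly_surjective' y
  have hf : colimit.ι (yoneda.obj c) X f
      = colimit.ι (yoneda.obj c) (Opposite.op c) (𝟙 c) := by
    have := types_congr_hom (colimit.w (yoneda.obj c) (f.op : Opposite.op c ⟶ X)) (𝟙 c)
    simpa using this
  have hg : colimit.ι (yoneda.obj c) Y g
      = colimit.ι (yoneda.obj c) (Opposite.op c) (𝟙 c) := by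
    have := types_congr_hom (colimit.w (yoneda.obj c) (g.op : Opposite.op c ⟶ Y)) (𝟙 c)
    simpa using this
  rw [hf, hg]

lemma colim_yoneda_nonempty {C : Type} [SmallCategory C] (c : C) :
    Nonempty (colimit (yoneda.obj c)) :=
  ⟨colimit.ι (yoneda.obj c) (Opposite.op c) (𝟙 c)⟩

/-- If the small category `C` is cosifted (the colimit functor on `Type`-valued
presheaves preserves finite products), then for any objects `c i : C`, the only
morphisms from `y(c) ⨯ y(i)` to the constant presheaf at `Bool` are the two
constant ones; i.e. representables are internally connected. -/
theorem representable_internally_connected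
    (C : Type) [SmallCategory C]
    [PreservesFiniteProducts (colim : (Cᵒᵖ ⥤ Type) ⥤ Type)]
    (c i : C) :
    Function.Bijective (fun b : Bool =>
      ({ app := fun _ => TypeCat.ofHom (fun _ => b), naturality := fun _ _ _ => rfl } :
        (yoneda.obj c ⨯ yoneda.obj i) ⟶ (Functor.const Cᵒᵖ).obj Bool)) := by
  set P := yoneda.obj c ⨯ yoneda.obj i with hP
  haveI : PreservesLimitsOfShape (Discrete WalkingPair)
      (colim : (Cᵒᵖ ⥤ Type) ⥤ Type) :=
    inferInstance
  let e₁ : colim.obj P ≅ colim.obj (yoneda.obj c) ⨯ colim.obj (yoneda.obj i) :=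
    PreservesLimitPair.iso colim (yoneda.obj c) (yoneda.obj i)
  let e₂ : (colim.obj (yoneda.obj c) ⨯ colim.obj (yoneda.obj i) : Type) ≅
      colim.obj (yoneda.obj c) × colim.obj (yoneda.obj i) :=
    Types.binaryProductIso _ _
  let e : colimit P ≃ colimit (yoneda.obj c) × colimit (yoneda.obj i) :=
    (e₁ ≪≫ e₂).toEquiv
  haveI := colim_yoneda_subsingleton (C := C) c
  haveI := colim_yoneda_subsingleton (C := C) i
  haveI hsub : Subsingleton (colimit P) := e.subsingleton
  have hne : Nonempty (colimit P) :=
    ⟨e.symm ((colim_yoneda_nonempty c).some, (colim_yoneda_nonempty i).some)⟩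
  constructor
  · intro b₁ b₂ h
    obtain ⟨x0⟩ := hne
    obtain ⟨X, x, -⟩ := Types.jointly_surjective' x0
    exact types_congr_hom (congrFun (congrArg NatTrans.app h) X) x
  · intro f
    have hdesc : ∀ (X : Cᵒᵖ) (x : P.obj X),
        f.app X x = colimit.desc P ⟨Bool, f⟩ (colimit.ι P X x) :=
      fun X x => (types_congr_hom (colimit.ι_desc ⟨Bool, f⟩ X) x).symm
    obtain ⟨x0⟩ := hne
    refine ⟨colimit.desc P ⟨Bool, f⟩ x0, ?_⟩
    apply NatTrans.ext
    funext X
    refine ConcreteCategory.hom_ext _ _ fun x => ?_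
    have : colimit.ι P X x = x0 := Subsingleton.elim _ _
    simp only []
    rw [hdesc X x, this]
    rfl
end

section
/- Let C be a small category, c an object of C, and S a sieve on c whose membership is decidable (for every object c' and morphism f : c' ⟶ c, it is decidable whether f ∈ S). Let 𝒮 denote the full subcategory of the over category C/c on those objects f with f ∈ S, with inclusion functor ι : 𝒮 ⥤ C/c. Then for all functors A : 𝒮ᵒᵖ ⥤ Type and B : (C/c)ᵒᵖ ⥤ Type and every natural isomorphism s : A ≅ ι.op ⋙ B, there exist a functor B' : (C/c)ᵒᵖ ⥤ Type and a natural isomorphism s' : B' ≅ B such that ι.op ⋙ B' = A and, modulo this equality of functors, the whiskering of s' along ι.op equals s. (This is the core of the statement that decidable sieves satisfy the strictness axiom in presheaf toposes.) -/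
open CategoryTheory Opposite

section Aux

variable (C : Type) [SmallCategory C] (c : C) (S : Sieve c)
  (hdec : ∀ (c' : C) (f : c' ⟶ c), Decidable (S.arrows f))
  (A : (ObjectProperty.FullSubcategory (fun g : Over c => S.arrows g.hom))ᵒᵖ ⥤ Type)
  (B : (Over c)ᵒᵖ ⥤ Type)
  (s : A ≅ (ObjectProperty.ι (fun g : Over c => S.arrows g.hom)).op ⋙ B)

def Bobj (g : (Over c)ᵒᵖ) : Type :=
  @dite _ (S.arrows g.unop.hom) (hdec _ _) (fun h => A.obj (op ⟨g.unop, h⟩)) (fun _ => B.obj g)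

def eIso (g : (Over c)ᵒᵖ) : Bobj C c S hdec A B g ≅ B.obj g :=
  @dite _ (S.arrows g.unop.hom) (hdec _ _)
    (fun h => eqToIso (dif_pos h) ≪≫ s.app (op ⟨g.unop, h⟩))
    (fun h => eqToIso (dif_neg h))

lemma eIso_pos (g : (Over c)ᵒᵖ) (h : S.arrows g.unop.hom) :
    eIso C c S hdec A B s g = eqToIso (dif_pos h) ≪≫ s.app (op ⟨g.unop, h⟩) :=
  dif_pos h

def Bext : (Over c)ᵒᵖ ⥤ Type where
  obj := Bobj C c S hdec A B
  map f := (eIso C c S hdec A B s _).hom ≫ B.map f ≫ (eIso C c S hdec A B s _).inv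
  map_id g := by simp
  map_comp f g := by simp

def sIso : Bext C c S hdec A B s ≅ B :=
  NatIso.ofComponents (eIso C c S hdec A B s) (by intros; simp [Bext])

lemma hcomp :
    (ObjectProperty.ι (fun g : Over c => S.arrows g.hom)).op ⋙ Bext C c S hdec A B s
      = A := by
  refine CategoryTheory.Functor.ext (fun X => dif_pos X.unop.property) (fun X Y f => ?_)
  have hn := s.hom.naturality f
  have h1 := eIso_pos C c S hdec A B s
    ((ObjectProperty.ι fun g : Over c => S.arrows g.hom).op.obj X) X.unop.property
  have h2 := eIso_pos C c S hdec A B s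
    ((ObjectProperty.ι fun g : Over c => S.arrows g.hom).op.obj Y) Y.unop.property
  simp only [Functor.comp_map, Bext]
  rw [h1, h2]
  simp only [Iso.trans_hom, Iso.trans_inv, eqToIso.hom, eqToIso.inv, Iso.app_hom, Iso.app_inv,
    Category.assoc]
  refine (Category.assoc _ _ _).trans ?_
  congr 1
  show s.hom.app X ≫ ((ObjectProperty.ι fun g : Over c => S.arrows g.hom).op ⋙ B).map f
      ≫ s.inv.app Y ≫ eqToHom ((dif_pos Y.unop.property : Bobj C c S hdec A B
        ((ObjectProperty.ι fun g : Over c => S.arrows g.hom).op.obj Y) = A.obj Y).symm)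
    = A.map f ≫ eqToHom ((dif_pos Y.unop.property : Bobj C c S hdec A B
        ((ObjectProperty.ι fun g : Over c => S.arrows g.hom).op.obj Y) = A.obj Y).symm)
  rw [← Category.assoc, ← hn, Category.assoc, Iso.hom_inv_id_app_assoc]

universe u₁ v₁ u₂ v₂

lemma heq_aux {D : Type u₁} [Category.{v₁} D] {E : Type u₂} [Category.{v₂} E] {F G H : D ⥤ E}
    (h : F = G) (α : F ≅ H) (β : G ≅ H)
    (happ : ∀ X, α.hom.app X = eqToHom (Functor.congr_obj h X) ≫ β.hom.app X) :
    HEq α β := by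
  subst h
  apply heq_of_eq
  ext X
  simpa using happ X

end Aux

/-- The strictness property for a decidable sieve `S` on `c`: any presheaf `A` on
the full subcategory `𝒮` of `C/c` determined by `S` that is isomorphic to the
restriction of a presheaf `B` on `C/c` extends strictly to a presheaf `B'` on
`C/c` isomorphic to `B`, with the isomorphism restricting to the given one. -/
theorem decidable_sieve_strictness
    (C : Type) [SmallCategory C] (c : C) (S : Sieve c)
    (hdec : ∀ (c' : C) (f : c' ⟶ c), Decidable (S.arrows f))
    (A : (ObjectProperty.FullSubcategory (fun g : Over c => S.arrows g.hom))ᵒᵖ ⥤ Type)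
    (B : (Over c)ᵒᵖ ⥤ Type)
    (s : A ≅ (ObjectProperty.ι (fun g : Over c => S.arrows g.hom)).op ⋙ B) :
    ∃ (B' : (Over c)ᵒᵖ ⥤ Type) (s' : B' ≅ B),
      ∃ _h : (ObjectProperty.ι (fun g : Over c => S.arrows g.hom)).op ⋙ B' = A,
        HEq (Functor.isoWhiskerLeft (ObjectProperty.ι
          (fun g : Over c => S.arrows g.hom)).op s') s := by
  refine ⟨Bext C c S hdec A B s, sIso C c S hdec A B s, hcomp C c S hdec A B s, ?_⟩
  apply heq_aux (hcomp C c S hdec A B s)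
  intro X
  have h1 := eIso_pos C c S hdec A B s (op X.unop.obj) X.unop.property
  show (eIso C c S hdec A B s (op X.unop.obj)).hom = _
  rw [h1]
  simp
  rfl
end
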